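/- arXiv:1311.0531 — 7 statements merged into one kernel-verified Lean document; each statement's English description precedes it below -/
import Mathlib

section
/- If A and B are finite non-collinear subsets of ℝ², then b_{A+B} ≥ b_A + b_B, where b_A denotes the number of points of A lying on the frontier of the convex hull of A. -/
open scoped Pointwise Classical RealInnerProductSpace

noncomputable section

/-- The plane `ℝ²`. -/
abbrev Pt : Type := EuclideanSpace ℝ (Fin 2)

/-- `b_A`: the number of points of `A` on the frontier of the convex hull of `A`. -/
def bdryCard (A : Finset Pt) : ℕ :=
  (A.filter fun x => x ∈ frontier (convexHull ℝ (A : Set Pt))).card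

/-- `i_A`: the number of points of `A` in the interior of the convex hull of `A`. -/
def intCard (A : Finset Pt) : ℕ :=
  (A.filter fun x => x ∈ interior (convexHull ℝ (A : Set Pt))).card

/-- `u` is an exterior normal to the convex hull of `A` at `x`,
i.e. `u·x = max {u·y : y ∈ A}` (for `x ∈ A`). -/
def IsExtNormal (A : Finset Pt) (u x : Pt) : Prop :=
  ∀ y ∈ A, ⟪u, y⟫ ≤ ⟪u, x⟫

/-- `A_u`: the set of points of `A` where `u·x` is maximal. -/
def maxSet (A : Finset Pt) (u : Pt) : Finset Pt :=
  A.filter fun x => ∀ y ∈ A, ⟪u, y⟫ ≤ ⟪u, x⟫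

/-- `C` is an arithmetic progression with difference `d`. -/
def IsAP (C : Finset Pt) (d : Pt) : Prop :=
  ∃ c : Pt, C = (Finset.range C.card).image fun k => c + (k : ℝ) • d

/-- `A_{v,upp}`: points of `A` having a nonzero exterior normal, all of whose
unit exterior normals `u` satisfy `u·v > 0`. -/
def upperSet (A : Finset Pt) (v : Pt) : Finset Pt :=
  A.filter fun a => (∃ u : Pt, u ≠ 0 ∧ IsExtNormal A u a) ∧
    ∀ u : Pt, ‖u‖ = 1 → IsExtNormal A u a → 0 < ⟪u, v⟫

/-- `A_{v,low}`: points of `A` having a nonzero exterior normal, all of whose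
unit exterior normals `u` satisfy `u·v < 0`. -/
def lowerSet (A : Finset Pt) (v : Pt) : Finset Pt :=
  A.filter fun a => (∃ u : Pt, u ≠ 0 ∧ IsExtNormal A u a) ∧
    ∀ u : Pt, ‖u‖ = 1 → IsExtNormal A u a → ⟪u, v⟫ < 0

/-- The unit vector `v` is not parallel to any side of the convex hull of `A`. -/
def NotParallelToSide (v : Pt) (A : Finset Pt) : Prop :=
  ∀ u : Pt, ‖u‖ = 1 → ⟪u, v⟫ = 0 → (maxSet A u).card ≤ 1

/-- For `v = (v₁, v₂)`, the rotated vector `w = (v₂, -v₁)`. -/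
def perp (v : Pt) : Pt := (EuclideanSpace.equiv (Fin 2) ℝ).symm ![v 1, -(v 0)]

/-- `r_{v,A}`: a point of `A` where `(perp v)·x` is maximal (the rightmost point of `A`);
it is unique when `v` is not parallel to any side of the convex hull of `A`. -/
def rPt (v : Pt) (A : Finset Pt) : Pt :=
  if h : ∃ x ∈ A, ∀ y ∈ A, ⟪perp v, y⟫ ≤ ⟪perp v, x⟫ then h.choose else 0

/-- `l_{v,A}`: a point of `A` where `(perp v)·x` is minimal (the leftmost point of `A`);
it is unique when `v` is not parallel to any side of the convex hull of `A`. -/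
def lPt (v : Pt) (A : Finset Pt) : Pt :=
  if h : ∃ x ∈ A, ∀ y ∈ A, ⟪perp v, x⟫ ≤ ⟪perp v, y⟫ then h.choose else 0

namespace BSG

open Finset

/-! ### Coordinate helpers -/

def mk2 (a b : ℝ) : Pt := (EuclideanSpace.equiv (Fin 2) ℝ).symm ![a, b]
@[simp] lemma mk2_0 (a b : ℝ) : mk2 a b 0 = a := rfl
@[simp] lemma mk2_1 (a b : ℝ) : mk2 a b 1 = b := rfl

lemma inner2 (x y : Pt) : ⟪x, y⟫ = x 0 * y 0 + x 1 * y 1 := by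
  simp [PiLp.inner_apply, RCLike.inner_apply, Fin.sum_univ_two]; ring

lemma ext2 {x y : Pt} (h0 : x 0 = y 0) (h1 : x 1 = y 1) : x = y := by
  ext i; fin_cases i <;> assumption

/-- If all points of a finite set have the same inner product with a nonzero
vector `n`, the set is collinear. -/
lemma collinear_of_const_inner (X : Finset Pt) (n : Pt) (hn : n ≠ 0)
    (h : ∀ p ∈ X, ∀ q ∈ X, ⟪n, p⟫ = ⟪n, q⟫) : Collinear ℝ (X : Set Pt) := by
  rcases X.eq_empty_or_nonempty with rfl | ⟨p₀, hp₀⟩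
  · simp [collinear_empty]
  · rw [collinear_iff_of_mem (Finset.mem_coe.mpr hp₀)]
    refine ⟨mk2 (n 1) (-(n 0)), ?_⟩
    intro p hp
    have hz : ⟪n, p - p₀⟫ = 0 := by
      rw [inner_sub_right, h p (Finset.mem_coe.mp hp) p₀ hp₀, sub_self]
    have hz' : n 0 * (p 0 - p₀ 0) + n 1 * (p 1 - p₀ 1) = 0 := by
      have : n 0 * (p - p₀) 0 + n 1 * (p - p₀) 1 = 0 := by rw [← inner2]; exact hz
      exact this
    have hn01 : n 0 ≠ 0 ∨ n 1 ≠ 0 := by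
      by_contra hcon
      push_neg at hcon
      exact hn (ext2 (by simp [hcon.1]) (by simp [hcon.2]))
    have hsub : ∀ c : ℝ, p - p₀ = c • mk2 (n 1) (-(n 0)) → p = c • mk2 (n 1) (-(n 0)) +ᵥ p₀ := by
      intro c hc
      have : p = (p - p₀) + p₀ := by abel
      rw [this, hc]; rfl
    rcases hn01 with h0 | h1
    · refine ⟨-((p 1) - (p₀ 1)) / n 0, hsub _ (ext2 ?_ ?_)⟩
      · show p 0 - p₀ 0 = (-((p 1) - (p₀ 1)) / n 0) * (mk2 (n 1) (-(n 0)) 0)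
        rw [mk2_0]; field_simp; linarith [hz']
      · show p 1 - p₀ 1 = (-((p 1) - (p₀ 1)) / n 0) * (mk2 (n 1) (-(n 0)) 1)
        rw [mk2_1]; field_simp
    · have h0 : n 0 = 0 ∨ n 0 ≠ 0 := em _
      rcases h0 with h0 | h0
      · have hz1 : p 1 - p₀ 1 = 0 := by
          have h2 : n 1 * (p 1 - p₀ 1) = 0 := by rw [h0] at hz'; linarith
          exact (mul_eq_zero.mp h2).resolve_left h1
        refine ⟨(p 0 - p₀ 0) / n 1, hsub _ (ext2 ?_ ?_)⟩
        · show p 0 - p₀ 0 = ((p 0 - p₀ 0) / n 1) * (mk2 (n 1) (-(n 0)) 0)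
          rw [mk2_0]; field_simp
        · show p 1 - p₀ 1 = ((p 0 - p₀ 0) / n 1) * (mk2 (n 1) (-(n 0)) 1)
          rw [mk2_1, h0, hz1]; ring
      · refine ⟨-((p 1) - (p₀ 1)) / n 0, hsub _ (ext2 ?_ ?_)⟩
        · show p 0 - p₀ 0 = (-((p 1) - (p₀ 1)) / n 0) * (mk2 (n 1) (-(n 0)) 0)
          rw [mk2_0]; field_simp; linarith [hz']
        · show p 1 - p₀ 1 = (-((p 1) - (p₀ 1)) / n 0) * (mk2 (n 1) (-(n 0)) 1)
          rw [mk2_1]; field_simp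

end BSG

namespace BSG

open Finset

/-! ### Exterior normals : basic lemmas -/

lemma extNormal_smul {X : Finset Pt} {u x : Pt} (h : IsExtNormal X u x) {c : ℝ}
    (hc : 0 < c) : IsExtNormal X (c • u) x := by
  intro y hy
  rw [real_inner_smul_left, real_inner_smul_left]
  exact mul_le_mul_of_nonneg_left (h y hy) hc.le

lemma extNormal_add_iff {A B : Finset Pt} {u a b : Pt} (ha : a ∈ A) (hb : b ∈ B) :
    IsExtNormal (A + B) u (a + b) ↔ IsExtNormal A u a ∧ IsExtNormal B u b := by
  constructor
  · intro h
    constructor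
    · intro y hy
      have h2 := h (y + b) (Finset.add_mem_add hy hb)
      rw [inner_add_right, inner_add_right] at h2
      linarith
    · intro y hy
      have h2 := h (a + y) (Finset.add_mem_add ha hy)
      rw [inner_add_right, inner_add_right] at h2
      linarith
  · rintro ⟨h1, h2⟩ z hz
    rw [Finset.mem_add] at hz
    obtain ⟨p, hp, q, hq, rfl⟩ := hz
    rw [inner_add_right, inner_add_right]
    exact add_le_add (h1 p hp) (h2 q hq)

/-- Monotonicity of maximizers in the rotating-direction parameter. -/
lemma mono_lemma {X : Finset Pt} {v w : Pt} {t t' : ℝ} (h : t < t') {x x' : Pt}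
    (hxX : x ∈ X) (hx'X : x' ∈ X)
    (hx : IsExtNormal X (v + t • w) x) (hx' : IsExtNormal X (v + t' • w) x') :
    ⟪w, x⟫ ≤ ⟪w, x'⟫ := by
  have h1 := hx x' hx'X
  have h2 := hx' x hxX
  simp only [inner_add_left, real_inner_smul_left] at h1 h2
  nlinarith [h1, h2]

/-- The rightmost point has an exterior normal of the form `v + t • w`. -/
lemma ray_lemma (X : Finset Pt) (v w : Pt) {r : Pt} (hr : r ∈ X)
    (hmax : ∀ y ∈ X, y ≠ r → ⟪w, y⟫ < ⟪w, r⟫) : ∃ t : ℝ, IsExtNormal X (v + t • w) r := by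
  have hne : X.Nonempty := ⟨r, hr⟩
  set f : Pt → ℝ := fun y =>
    if 0 < ⟪w, r⟫ - ⟪w, y⟫ then (⟪v, y⟫ - ⟪v, r⟫) / (⟪w, r⟫ - ⟪w, y⟫) else 0 with hf
  set M : ℝ := (X.image f).max' (hne.image f) with hM
  refine ⟨M, ?_⟩
  intro y hy
  by_cases hyr : y = r
  · subst hyr; exact le_rfl
  · have hd : 0 < ⟪w, r⟫ - ⟪w, y⟫ := sub_pos.mpr (hmax y hy hyr)
    have hfy : f y ≤ M := Finset.le_max' _ _ (Finset.mem_image_of_mem f hy)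
    rw [hf] at hfy
    simp only [if_pos hd] at hfy
    have h3 : ⟪v, y⟫ - ⟪v, r⟫ ≤ M * (⟪w, r⟫ - ⟪w, y⟫) := by
      rw [div_le_iff₀ hd] at hfy; linarith
    rw [inner_add_left, inner_add_left, real_inner_smul_left, real_inner_smul_left]
    nlinarith

/-- The key "link" lemma: a maximizer strictly between two crossing-free
parameters is a maximizer at both endpoints. -/
lemma link_lemma {X : Finset Pt} {v w : Pt}
    (hinj : ∀ p ∈ X, ∀ q ∈ X, ⟪w, p⟫ = ⟪w, q⟫ → p = q)
    {T : Finset ℝ}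
    (hT : ∀ p ∈ X, ∀ q ∈ X, p ≠ q → ∀ ρ : ℝ, ⟪v + ρ • w, p⟫ = ⟪v + ρ • w, q⟫ → ρ ∈ T)
    {t₁ t₂ s : ℝ} (h1 : t₁ < s) (h2 : s < t₂) (hgap : ∀ c ∈ T, ¬(t₁ < c ∧ c < t₂))
    {x : Pt} (hx : x ∈ X) (hxs : IsExtNormal X (v + s • w) x) :
    IsExtNormal X (v + t₁ • w) x ∧ IsExtNormal X (v + t₂ • w) x := by
  have key : ∀ y ∈ X, y ≠ x → ∀ τ : ℝ, τ = t₁ ∨ τ = t₂ →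
      ⟪v + τ • w, y⟫ ≤ ⟪v + τ • w, x⟫ := by
    intro y hy hyx τ hτ
    set c : ℝ := ⟪v, x⟫ - ⟪v, y⟫ with hc
    set d : ℝ := ⟪w, x⟫ - ⟪w, y⟫ with hd
    have hd0 : d ≠ 0 := fun h => hyx (hinj y hy x hx (by rw [hd] at h; linarith))
    have hexp : ∀ ρ : ℝ, ⟪v + ρ • w, x⟫ - ⟪v + ρ • w, y⟫ = c + ρ * d := by
      intro ρ
      simp only [inner_add_left, real_inner_smul_left]
      rw [hc, hd]; ring
    have hroot : ∀ ρ : ℝ, c + ρ * d = 0 → ¬(t₁ < ρ ∧ ρ < t₂) := by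
      intro ρ hρ
      refine hgap ρ (hT y hy x hx (Ne.symm (fun h => hyx h.symm)) ρ ?_)
      have := hexp ρ
      linarith
    have hgs : 0 < c + s * d := by
      have hle : 0 ≤ c + s * d := by
        have := hxs y hy
        have h2 := hexp s
        linarith
      rcases lt_or_eq_of_le hle with h | h
      · exact h
      · exact absurd ⟨h1, h2⟩ (hroot s h.symm)
    have hρval : c + (-c / d) * d = 0 := by field_simp; ring
    rcases hτ with rfl | rfl
    · -- show 0 ≤ c + t₁ * d
      have : 0 ≤ c + τ * d := by
        by_contra hneg
        push_neg at hneg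
        have hdpos : 0 < d := by nlinarith
        have hr1 : τ < -c / d := by rw [lt_div_iff₀ hdpos]; nlinarith
        have hr2 : -c / d < s := by rw [div_lt_iff₀ hdpos]; nlinarith
        exact hroot (-c / d) hρval ⟨hr1, lt_trans hr2 h2⟩
      have := hexp τ; linarith
    · have : 0 ≤ c + τ * d := by
        by_contra hneg
        push_neg at hneg
        have hdneg : d < 0 := by nlinarith
        have hr1 : s < -c / d := by rw [lt_div_iff_of_neg hdneg]; nlinarith
        have hr2 : -c / d < τ := by rw [div_lt_iff_of_neg hdneg]; nlinarith
        exact hroot (-c / d) hρval ⟨lt_trans h1 hr1, hr2⟩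
      have := hexp τ; linarith
  constructor <;>
  · intro y hy
    by_cases hyx : y = x
    · subst hyx; exact le_rfl
    · first
      | exact key y hy hyx t₁ (Or.inl rfl)
      | exact key y hy hyx t₂ (Or.inr rfl)

def nSet (X : Finset Pt) (v w : Pt) : Finset Pt :=
  X.filter fun x => ∃ t : ℝ, IsExtNormal X (v + t • w) x

lemma mem_nSet {X : Finset Pt} {v w x : Pt} :
    x ∈ nSet X v w ↔ x ∈ X ∧ ∃ t : ℝ, IsExtNormal X (v + t • w) x := Finset.mem_filter

lemma nSet_subset {X : Finset Pt} {v w : Pt} : nSet X v w ⊆ X := Finset.filter_subset _ _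

lemma mem_maxSet {X : Finset Pt} {u x : Pt} :
    x ∈ maxSet X u ↔ x ∈ X ∧ IsExtNormal X u x := Finset.mem_filter

end BSG

namespace BSG

open Finset

/-! ### One-dimensional counting machinery -/

lemma oneD {P Q : Finset ℝ} (hP : P.Nonempty) (hQ : Q.Nonempty) :
    P.card + Q.card ≤ (P + Q).card + 1 := by
  set a := P.min' hP with ha
  set b := Q.max' hQ with hb
  have h1 : P.image (· + b) ⊆ P + Q := by
    intro z hz
    obtain ⟨p, hp, rfl⟩ := Finset.mem_image.mp hz
    exact Finset.add_mem_add hp (Q.max'_mem hQ)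
  have h2 : Q.image (a + ·) ⊆ P + Q := by
    intro z hz
    obtain ⟨q, hq, rfl⟩ := Finset.mem_image.mp hz
    exact Finset.add_mem_add (P.min'_mem hP) hq
  have hc1 : (P.image (· + b)).card = P.card :=
    Finset.card_image_of_injective _ (add_left_injective b)
  have hc2 : (Q.image (a + ·)).card = Q.card :=
    Finset.card_image_of_injective _ (add_right_injective a)
  have hint : (P.image (· + b)) ∩ (Q.image (a + ·)) ⊆ {a + b} := by
    intro z hz
    obtain ⟨hz1, hz2⟩ := Finset.mem_inter.mp hz
    obtain ⟨p, hp, hpz⟩ := Finset.mem_image.mp hz1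
    obtain ⟨q, hq, hqz⟩ := Finset.mem_image.mp hz2
    have hap : a ≤ p := P.min'_le p hp
    have hqb : q ≤ b := Q.le_max' q hq
    have : z = a + b := by
      have e1 : p + b = z := hpz
      have e2 : a + q = z := hqz
      linarith
    simp [this]
  have hkey := Finset.card_union_add_card_inter (P.image (· + b)) (Q.image (a + ·))
  have hu : ((P.image (· + b)) ∪ (Q.image (a + ·))).card ≤ (P + Q).card :=
    Finset.card_le_card (Finset.union_subset h1 h2)
  have hi : ((P.image (· + b)) ∩ (Q.image (a + ·))).card ≤ 1 := by
    have := Finset.card_le_card hint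
    simpa using this
  omega

def UF (F : ℝ → Finset ℝ) : List ℝ → Finset ℝ
  | [] => ∅
  | t :: L => F t ∪ UF F L

lemma mem_UF {F : ℝ → Finset ℝ} {L : List ℝ} {z : ℝ} :
    z ∈ UF F L ↔ ∃ t ∈ L, z ∈ F t := by
  induction L with
  | nil => simp [UF]
  | cons t L ih =>
    simp only [UF, Finset.mem_union, ih, List.mem_cons]
    constructor
    · rintro (h | ⟨s, hs, hz⟩)
      · exact ⟨t, Or.inl rfl, h⟩
      · exact ⟨s, Or.inr hs, hz⟩
    · rintro ⟨s, hs | hs, hz⟩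
      · subst hs; exact Or.inl hz
      · exact Or.inr ⟨s, hs, hz⟩

def Rel (P Q : ℝ → Finset ℝ) (a b : ℝ) : Prop :=
  (P a ∩ P b).Nonempty ∧ (Q a ∩ Q b).Nonempty ∧
  (∀ x ∈ P a, ∀ y ∈ P b, x ≤ y) ∧ (∀ x ∈ Q a, ∀ y ∈ Q b, x ≤ y)

lemma rel_sum_le {P Q : ℝ → Finset ℝ} {a b : ℝ} (h : Rel P Q a b) :
    ∀ x ∈ P a + Q a, ∀ y ∈ P b + Q b, x ≤ y := by
  intro x hx y hy
  rw [Finset.mem_add] at hx hy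
  obtain ⟨p, hp, q, hq, rfl⟩ := hx
  obtain ⟨p', hp', q', hq', rfl⟩ := hy
  exact add_le_add (h.2.2.1 p hp p' hp') (h.2.2.2 q hq q' hq')

lemma UF_lower {P Q : ℝ → Finset ℝ} (hP : ∀ t, (P t).Nonempty) (hQ : ∀ t, (Q t).Nonempty) :
    ∀ (L : List ℝ) (t₀ : ℝ), List.Chain' (Rel P Q) (t₀ :: L) →
      ∀ z ∈ UF (fun t => P t + Q t) (t₀ :: L), ∃ x ∈ P t₀ + Q t₀, x ≤ z := by
  intro L
  induction L with
  | nil =>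
    intro t₀ _ z hz
    refine ⟨z, ?_, le_rfl⟩
    simpa [UF] using hz
  | cons t₁ L' ih =>
    intro t₀ hch z hz
    rw [show UF (fun t => P t + Q t) (t₀ :: t₁ :: L') =
        (P t₀ + Q t₀) ∪ UF (fun t => P t + Q t) (t₁ :: L') from rfl, Finset.mem_union] at hz
    rcases hz with hz | hz
    · exact ⟨z, hz, le_rfl⟩
    · obtain ⟨x₁, hx₁, hle⟩ := ih t₁ hch.tail z hz
      obtain ⟨p, hp⟩ := hP t₀
      obtain ⟨q, hq⟩ := hQ t₀
      have hrel : Rel P Q t₀ t₁ := (List.isChain_cons_cons.mp hch).1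
      exact ⟨p + q, Finset.add_mem_add hp hq,
        le_trans (rel_sum_le hrel _ (Finset.add_mem_add hp hq) _ hx₁) hle⟩

lemma count_lemma {P Q : ℝ → Finset ℝ} (hP : ∀ t, (P t).Nonempty) (hQ : ∀ t, (Q t).Nonempty) :
    ∀ L : List ℝ, List.Chain' (Rel P Q) L → L ≠ [] →
      (UF P L).card + (UF Q L).card ≤ (UF (fun t => P t + Q t) L).card + 1 := by
  intro L
  induction L with
  | nil => intro _ h; exact absurd rfl h
  | cons t₀ L ih =>
    intro hch _
    cases L with
    | nil =>
      have h1 : UF P [t₀] = P t₀ := by simp [UF]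
      have h2 : UF Q [t₀] = Q t₀ := by simp [UF]
      have h3 : UF (fun t => P t + Q t) [t₀] = P t₀ + Q t₀ := by simp [UF]
      rw [h1, h2, h3]
      exact oneD (hP t₀) (hQ t₀)
    | cons t₁ L' =>
      have hch' : List.Chain' (Rel P Q) (t₁ :: L') := hch.tail
      have hrel : Rel P Q t₀ t₁ := (List.isChain_cons_cons.mp hch).1
      have IH := ih hch' (by simp)
      obtain ⟨ph, hph⟩ := hrel.1
      obtain ⟨qh, hqh⟩ := hrel.2.1
      have hphp : ph ∈ P t₀ := (Finset.mem_inter.mp hph).1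
      have hph1 : ph ∈ P t₁ := (Finset.mem_inter.mp hph).2
      have hqhq : qh ∈ Q t₀ := (Finset.mem_inter.mp hqh).1
      have hqh1 : qh ∈ Q t₁ := (Finset.mem_inter.mp hqh).2
      set S : ℝ → Finset ℝ := fun t => P t + Q t with hS
      have hUFP : UF P (t₀ :: t₁ :: L') = P t₀ ∪ UF P (t₁ :: L') := rfl
      have hUFQ : UF Q (t₀ :: t₁ :: L') = Q t₀ ∪ UF Q (t₁ :: L') := rfl
      have hUFS : UF S (t₀ :: t₁ :: L') = S t₀ ∪ UF S (t₁ :: L') := rfl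
      have eP := Finset.card_union_add_card_inter (P t₀) (UF P (t₁ :: L'))
      have eQ := Finset.card_union_add_card_inter (Q t₀) (UF Q (t₁ :: L'))
      have eS := Finset.card_union_add_card_inter (S t₀) (UF S (t₁ :: L'))
      have hPint : 1 ≤ ((P t₀) ∩ UF P (t₁ :: L')).card :=
        Finset.card_pos.mpr ⟨ph, Finset.mem_inter.mpr
          ⟨hphp, mem_UF.mpr ⟨t₁, List.mem_cons_self, hph1⟩⟩⟩
      have hQint : 1 ≤ ((Q t₀) ∩ UF Q (t₁ :: L')).card :=
        Finset.card_pos.mpr ⟨qh, Finset.mem_inter.mpr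
          ⟨hqhq, mem_UF.mpr ⟨t₁, List.mem_cons_self, hqh1⟩⟩⟩
      have hSint : ((S t₀) ∩ UF S (t₁ :: L')).card ≤ 1 := by
        have hsub : (S t₀) ∩ UF S (t₁ :: L') ⊆ {ph + qh} := by
          intro z hz
          obtain ⟨hz0, hz1⟩ := Finset.mem_inter.mp hz
          have hle1 : z ≤ ph + qh := by
            rw [hS] at hz0
            simp only at hz0
            rw [Finset.mem_add] at hz0
            obtain ⟨p, hp, q, hq, rfl⟩ := hz0
            exact add_le_add (hrel.2.2.1 p hp ph hph1) (hrel.2.2.2 q hq qh hqh1)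
          have hle2 : ph + qh ≤ z := by
            obtain ⟨x, hx, hxz⟩ := UF_lower hP hQ L' t₁ hch' z hz1
            refine le_trans ?_ hxz
            rw [Finset.mem_add] at hx
            obtain ⟨p', hp', q', hq', rfl⟩ := hx
            exact add_le_add (hrel.2.2.1 ph hphp p' hp') (hrel.2.2.2 qh hqhq q' hq')
          have : z = ph + qh := le_antisymm hle1 hle2
          simp [this]
        have := Finset.card_le_card hsub
        simpa using this
      have h1D : (P t₀).card + (Q t₀).card ≤ (S t₀).card + 1 := oneD (hP t₀) (hQ t₀)
      rw [hUFP, hUFQ, hUFS]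
      omega

end BSG

namespace BSG

open Finset

/-- In a strictly sorted list, consecutive entries have no list element strictly
between them (relative to any previous elements as well). -/
lemma gap_chain : ∀ (L pre : List ℝ), List.Pairwise (· < ·) L →
    (∀ c ∈ pre, ∀ d ∈ L, c < d) →
    List.Chain' (fun a b => a < b ∧ ∀ c : ℝ, (c ∈ pre ∨ c ∈ L) → c ≤ a ∨ b ≤ c) L := by
  intro L
  induction L with
  | nil => intro pre _ _; exact List.IsChain.nil
  | cons x xs ih =>
    intro pre hs hpre
    have hx : ∀ d ∈ xs, x < d := (List.pairwise_cons.mp hs).1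
    have hs' : List.Pairwise (· < ·) xs := (List.pairwise_cons.mp hs).2
    have ih' := ih (pre ++ [x]) hs' (by
      intro c hc d hd
      rcases List.mem_append.mp hc with hc | hc
      · exact hpre c hc d (List.mem_cons_of_mem x hd)
      · rw [List.mem_singleton.mp hc]; exact hx d hd)
    cases xs with
    | nil => exact List.IsChain.singleton _
    | cons y ys =>
      refine List.isChain_cons_cons.mpr ⟨⟨hx y List.mem_cons_self, ?_⟩, ?_⟩
      · intro c hc
        rcases hc with hc | hc
        · exact Or.inl (le_of_lt (hpre c hc x List.mem_cons_self))
        · rcases List.mem_cons.mp hc with rfl | hc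
          · exact Or.inl le_rfl
          · rcases List.mem_cons.mp hc with rfl | hc
            · exact Or.inr le_rfl
            · exact Or.inr (le_of_lt ((List.pairwise_cons.mp hs').1 c hc))
      · refine ih'.imp ?_
        rintro a b ⟨hab, hmem⟩
        refine ⟨hab, ?_⟩
        intro c hc
        refine hmem c ?_
        rcases hc with hc | hc
        · exact Or.inl (List.mem_append.mpr (Or.inl hc))
        · rcases List.mem_cons.mp hc with rfl | hc
          · exact Or.inl (List.mem_append.mpr (Or.inr (List.mem_singleton.mpr rfl)))
          · exact Or.inr hc

end BSG

namespace BSG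

open Finset

lemma inj_left {A B : Finset Pt} {w : Pt}
    (hinj : ∀ p ∈ A + B, ∀ q ∈ A + B, ⟪w, p⟫ = ⟪w, q⟫ → p = q) {b₀ : Pt} (hb₀ : b₀ ∈ B) :
    ∀ p ∈ A, ∀ q ∈ A, ⟪w, p⟫ = ⟪w, q⟫ → p = q := by
  intro p hp q hq h
  have h2 : ⟪w, p + b₀⟫ = ⟪w, q + b₀⟫ := by rw [inner_add_right, inner_add_right, h]
  exact add_right_cancel
    (hinj _ (Finset.add_mem_add hp hb₀) _ (Finset.add_mem_add hq hb₀) h2)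

lemma inj_right {A B : Finset Pt} {w : Pt}
    (hinj : ∀ p ∈ A + B, ∀ q ∈ A + B, ⟪w, p⟫ = ⟪w, q⟫ → p = q) {a₀ : Pt} (ha₀ : a₀ ∈ A) :
    ∀ p ∈ B, ∀ q ∈ B, ⟪w, p⟫ = ⟪w, q⟫ → p = q := by
  intro p hp q hq h
  have h2 : ⟪w, a₀ + p⟫ = ⟪w, a₀ + q⟫ := by rw [inner_add_right, inner_add_right, h]
  exact add_left_cancel
    (hinj _ (Finset.add_mem_add ha₀ hp) _ (Finset.add_mem_add ha₀ hq) h2)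

set_option maxHeartbeats 1000000 in
/-- The key counting lemma for half-boundaries. -/
lemma nSet_card_lemma (A B : Finset Pt) (hAne : A.Nonempty) (hBne : B.Nonempty) (v w : Pt)
    (hinj : ∀ p ∈ A + B, ∀ q ∈ A + B, ⟪w, p⟫ = ⟪w, q⟫ → p = q) :
    (nSet A v w).card + (nSet B v w).card ≤ (nSet (A + B) v w).card + 1 := by
  obtain ⟨b₀, hb₀⟩ := hBne
  obtain ⟨a₀, ha₀⟩ := hAne
  have hinjA := inj_left hinj hb₀
  have hinjB := inj_right hinj ha₀
  -- the finite set of all crossing parameters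
  set T : Finset ℝ := (((A ∪ B) ×ˢ (A ∪ B)).filter fun pq => ⟪w, pq.1⟫ ≠ ⟪w, pq.2⟫).image
    (fun pq => (⟪v, pq.2⟫ - ⟪v, pq.1⟫) / (⟪w, pq.1⟫ - ⟪w, pq.2⟫)) with hT
  have hTroot : ∀ p ∈ A ∪ B, ∀ q ∈ A ∪ B, ⟪w, p⟫ ≠ ⟪w, q⟫ →
      ∀ ρ : ℝ, ⟪v + ρ • w, p⟫ = ⟪v + ρ • w, q⟫ → ρ ∈ T := by
    intro p hp q hq hne ρ heq
    simp only [inner_add_left, real_inner_smul_left] at heq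
    refine Finset.mem_image.mpr ⟨(p, q), Finset.mem_filter.mpr
      ⟨Finset.mem_product.mpr ⟨hp, hq⟩, hne⟩, ?_⟩
    show (⟪v, q⟫ - ⟪v, p⟫) / (⟪w, p⟫ - ⟪w, q⟫) = ρ
    rw [div_eq_iff (sub_ne_zero.mpr hne)]
    linarith
  have hTA : ∀ p ∈ A, ∀ q ∈ A, p ≠ q →
      ∀ ρ : ℝ, ⟪v + ρ • w, p⟫ = ⟪v + ρ • w, q⟫ → ρ ∈ T := by
    intro p hp q hq hne ρ heq
    exact hTroot p (Finset.mem_union_left _ hp) q (Finset.mem_union_left _ hq)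
      (fun h => hne (hinjA p hp q hq h)) ρ heq
  have hTB : ∀ p ∈ B, ∀ q ∈ B, p ≠ q →
      ∀ ρ : ℝ, ⟪v + ρ • w, p⟫ = ⟪v + ρ • w, q⟫ → ρ ∈ T := by
    intro p hp q hq hne ρ heq
    exact hTroot p (Finset.mem_union_right _ hp) q (Finset.mem_union_right _ hq)
      (fun h => hne (hinjB p hp q hq h)) ρ heq
  -- bracketing parameters
  set tlo : ℝ := (insert (0:ℝ) T).min' (Finset.insert_nonempty 0 T) - 1 with htlo
  set thi : ℝ := (insert (0:ℝ) T).max' (Finset.insert_nonempty 0 T) + 1 with hthi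
  have hlow : ∀ c ∈ T, tlo < c := by
    intro c hc
    have := Finset.min'_le (insert (0:ℝ) T) c (Finset.mem_insert_of_mem hc)
    rw [htlo]; linarith
  have hhigh : ∀ c ∈ T, c < thi := by
    intro c hc
    have := Finset.le_max' (insert (0:ℝ) T) c (Finset.mem_insert_of_mem hc)
    rw [hthi]; linarith
  have hlohi : tlo < thi := by
    have h1 := Finset.min'_le (insert (0:ℝ) T) 0 (Finset.mem_insert_self 0 T)
    have h2 := Finset.le_max' (insert (0:ℝ) T) 0 (Finset.mem_insert_self 0 T)
    rw [htlo, hthi]; linarith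
  set T' : Finset ℝ := insert tlo (insert thi T) with hT'
  have htloT' : tlo ∈ T' := Finset.mem_insert_self _ _
  have hthiT' : thi ∈ T' := Finset.mem_insert_of_mem (Finset.mem_insert_self _ _)
  have hTT' : ∀ c ∈ T, c ∈ T' := fun c hc =>
    Finset.mem_insert_of_mem (Finset.mem_insert_of_mem hc)
  set L : List ℝ := Finset.sort T' (· ≤ ·) with hL
  have hmemL : ∀ c : ℝ, c ∈ L ↔ c ∈ T' := fun c => Finset.mem_sort _
  have hLne : L ≠ [] := by
    intro h
    have h2 : tlo ∈ L := (hmemL tlo).mpr htloT'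
    rw [h] at h2
    simp at h2
  -- the two families of projections
  set P : ℝ → Finset ℝ := fun t => (maxSet A (v + t • w)).image (fun x => ⟪w, x⟫) with hP
  set Q : ℝ → Finset ℝ := fun t => (maxSet B (v + t • w)).image (fun x => ⟪w, x⟫) with hQ
  have hPne : ∀ t, (P t).Nonempty := by
    intro t
    obtain ⟨m, hm, hmax⟩ := A.exists_max_image (fun y => ⟪v + t • w, y⟫) ⟨a₀, ha₀⟩
    exact ⟨⟪w, m⟫, Finset.mem_image_of_mem _ (mem_maxSet.mpr ⟨hm, hmax⟩)⟩
  have hQne : ∀ t, (Q t).Nonempty := by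
    intro t
    obtain ⟨m, hm, hmax⟩ := B.exists_max_image (fun y => ⟪v + t • w, y⟫) ⟨b₀, hb₀⟩
    exact ⟨⟪w, m⟫, Finset.mem_image_of_mem _ (mem_maxSet.mpr ⟨hm, hmax⟩)⟩
  -- the chain property along L
  have hchain : List.Chain' (Rel P Q) L := by
    refine (gap_chain L [] (Finset.sortedLT_sort T').pairwise (by simp)).imp ?_
    rintro a b ⟨hab, hmem⟩
    have hgapT : ∀ c ∈ T, ¬(a < c ∧ c < b) := by
      intro c hc hcon
      rcases hmem c (Or.inr ((hmemL c).mpr (hTT' c hc))) with h | h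
      · exact absurd hcon.1 (not_lt.mpr h)
      · exact absurd hcon.2 (not_lt.mpr h)
    have h1 : a < (a + b) / 2 := by linarith
    have h2 : (a + b) / 2 < b := by linarith
    obtain ⟨xa, hxa, hmaxa⟩ :=
      A.exists_max_image (fun y => ⟪v + ((a + b) / 2) • w, y⟫) ⟨a₀, ha₀⟩
    obtain ⟨xb, hxb, hmaxb⟩ :=
      B.exists_max_image (fun y => ⟪v + ((a + b) / 2) • w, y⟫) ⟨b₀, hb₀⟩
    obtain ⟨hna1, hna2⟩ := link_lemma hinjA hTA h1 h2 hgapT hxa hmaxa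
    obtain ⟨hnb1, hnb2⟩ := link_lemma hinjB hTB h1 h2 hgapT hxb hmaxb
    refine ⟨⟨⟪w, xa⟫, Finset.mem_inter.mpr ⟨?_, ?_⟩⟩, ⟨⟪w, xb⟫, Finset.mem_inter.mpr ⟨?_, ?_⟩⟩,
      ?_, ?_⟩
    · exact Finset.mem_image_of_mem _ (mem_maxSet.mpr ⟨hxa, hna1⟩)
    · exact Finset.mem_image_of_mem _ (mem_maxSet.mpr ⟨hxa, hna2⟩)
    · exact Finset.mem_image_of_mem _ (mem_maxSet.mpr ⟨hxb, hnb1⟩)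
    · exact Finset.mem_image_of_mem _ (mem_maxSet.mpr ⟨hxb, hnb2⟩)
    · intro x hx y hy
      obtain ⟨x', hx', rfl⟩ := Finset.mem_image.mp hx
      obtain ⟨y', hy', rfl⟩ := Finset.mem_image.mp hy
      obtain ⟨hx'A, hx'n⟩ := mem_maxSet.mp hx'
      obtain ⟨hy'A, hy'n⟩ := mem_maxSet.mp hy'
      exact mono_lemma hab hx'A hy'A hx'n hy'n
    · intro x hx y hy
      obtain ⟨x', hx', rfl⟩ := Finset.mem_image.mp hx
      obtain ⟨y', hy', rfl⟩ := Finset.mem_image.mp hy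
      obtain ⟨hx'B, hx'n⟩ := mem_maxSet.mp hx'
      obtain ⟨hy'B, hy'n⟩ := mem_maxSet.mp hy'
      exact mono_lemma hab hx'B hy'B hx'n hy'n
  -- coverage
  have hcovA : ∀ x ∈ nSet A v w, ∃ c ∈ T', IsExtNormal A (v + c • w) x := by
    intro x hx
    obtain ⟨hxA, t, ht⟩ := mem_nSet.mp hx
    by_cases htT' : t ∈ T'
    · exact ⟨t, htT', ht⟩
    · have htne1 : t ≠ tlo := fun h => htT' (h ▸ htloT')
      have htne2 : t ≠ thi := fun h => htT' (h ▸ hthiT')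
      rcases lt_trichotomy t tlo with hlt | heq | hgt
      · have hgap : ∀ c ∈ T, ¬(t - 1 < c ∧ c < tlo) := by
          intro c hc hcon
          exact absurd hcon.2 (not_lt.mpr (hlow c hc).le)
        exact ⟨tlo, htloT',
          (link_lemma hinjA hTA (by linarith : t - 1 < t) hlt hgap hxA ht).2⟩
      · exact absurd heq htne1
      · rcases lt_trichotomy t thi with hlt2 | heq2 | hgt2
        · have hne1 : (T'.filter (· < t)).Nonempty :=
            ⟨tlo, Finset.mem_filter.mpr ⟨htloT', hgt⟩⟩
          have hne2 : (T'.filter (t < ·)).Nonempty :=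
            ⟨thi, Finset.mem_filter.mpr ⟨hthiT', hlt2⟩⟩
          obtain ⟨c₁, hc₁mem', hc₁max⟩ : ∃ c₁ ∈ T'.filter (· < t),
              ∀ c ∈ T'.filter (· < t), c ≤ c₁ :=
            ⟨_, (T'.filter (· < t)).max'_mem hne1, fun c hc => Finset.le_max' _ c hc⟩
          obtain ⟨c₂, hc₂mem', hc₂min⟩ : ∃ c₂ ∈ T'.filter (t < ·),
              ∀ c ∈ T'.filter (t < ·), c₂ ≤ c :=
            ⟨_, (T'.filter (t < ·)).min'_mem hne2, fun c hc => Finset.min'_le _ c hc⟩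
          have hc₁mem := Finset.mem_filter.mp hc₁mem'
          have hc₂mem := Finset.mem_filter.mp hc₂mem'
          have hgap : ∀ c ∈ T, ¬(c₁ < c ∧ c < c₂) := by
            intro c hc hcon
            have hcT' : c ∈ T' := hTT' c hc
            have hct : c ≠ t := fun h => htT' (h ▸ hcT')
            rcases lt_or_gt_of_ne hct with h | h
            · exact absurd hcon.1 (not_lt.mpr (hc₁max c (Finset.mem_filter.mpr ⟨hcT', h⟩)))
            · exact absurd hcon.2 (not_lt.mpr (hc₂min c (Finset.mem_filter.mpr ⟨hcT', h⟩)))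
          exact ⟨c₁, hc₁mem.1,
            (link_lemma hinjA hTA hc₁mem.2 hc₂mem.2 hgap hxA ht).1⟩
        · exact absurd heq2 htne2
        · have hgap : ∀ c ∈ T, ¬(thi < c ∧ c < t + 1) := by
            intro c hc hcon
            exact absurd hcon.1 (not_lt.mpr (hhigh c hc).le)
          exact ⟨thi, hthiT',
            (link_lemma hinjA hTA hgt2 (by linarith : t < t + 1) hgap hxA ht).1⟩
  have hcovB : ∀ x ∈ nSet B v w, ∃ c ∈ T', IsExtNormal B (v + c • w) x := by
    intro x hx
    obtain ⟨hxB, t, ht⟩ := mem_nSet.mp hx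
    by_cases htT' : t ∈ T'
    · exact ⟨t, htT', ht⟩
    · have htne1 : t ≠ tlo := fun h => htT' (h ▸ htloT')
      have htne2 : t ≠ thi := fun h => htT' (h ▸ hthiT')
      rcases lt_trichotomy t tlo with hlt | heq | hgt
      · have hgap : ∀ c ∈ T, ¬(t - 1 < c ∧ c < tlo) := by
          intro c hc hcon
          exact absurd hcon.2 (not_lt.mpr (hlow c hc).le)
        exact ⟨tlo, htloT',
          (link_lemma hinjB hTB (by linarith : t - 1 < t) hlt hgap hxB ht).2⟩
      · exact absurd heq htne1
      · rcases lt_trichotomy t thi with hlt2 | heq2 | hgt2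
        · have hne1 : (T'.filter (· < t)).Nonempty :=
            ⟨tlo, Finset.mem_filter.mpr ⟨htloT', hgt⟩⟩
          have hne2 : (T'.filter (t < ·)).Nonempty :=
            ⟨thi, Finset.mem_filter.mpr ⟨hthiT', hlt2⟩⟩
          obtain ⟨c₁, hc₁mem', hc₁max⟩ : ∃ c₁ ∈ T'.filter (· < t),
              ∀ c ∈ T'.filter (· < t), c ≤ c₁ :=
            ⟨_, (T'.filter (· < t)).max'_mem hne1, fun c hc => Finset.le_max' _ c hc⟩
          obtain ⟨c₂, hc₂mem', hc₂min⟩ : ∃ c₂ ∈ T'.filter (t < ·),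
              ∀ c ∈ T'.filter (t < ·), c₂ ≤ c :=
            ⟨_, (T'.filter (t < ·)).min'_mem hne2, fun c hc => Finset.min'_le _ c hc⟩
          have hc₁mem := Finset.mem_filter.mp hc₁mem'
          have hc₂mem := Finset.mem_filter.mp hc₂mem'
          have hgap : ∀ c ∈ T, ¬(c₁ < c ∧ c < c₂) := by
            intro c hc hcon
            have hcT' : c ∈ T' := hTT' c hc
            have hct : c ≠ t := fun h => htT' (h ▸ hcT')
            rcases lt_or_gt_of_ne hct with h | h
            · exact absurd hcon.1 (not_lt.mpr (hc₁max c (Finset.mem_filter.mpr ⟨hcT', h⟩)))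
            · exact absurd hcon.2 (not_lt.mpr (hc₂min c (Finset.mem_filter.mpr ⟨hcT', h⟩)))
          exact ⟨c₁, hc₁mem.1,
            (link_lemma hinjB hTB hc₁mem.2 hc₂mem.2 hgap hxB ht).1⟩
        · exact absurd heq2 htne2
        · have hgap : ∀ c ∈ T, ¬(thi < c ∧ c < t + 1) := by
            intro c hc hcon
            exact absurd hcon.1 (not_lt.mpr (hhigh c hc).le)
          exact ⟨thi, hthiT',
            (link_lemma hinjB hTB hgt2 (by linarith : t < t + 1) hgap hxB ht).1⟩
  -- identification of the unions
  have hUP : UF P L = (nSet A v w).image (fun x => ⟪w, x⟫) := by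
    ext z
    rw [mem_UF]
    constructor
    · rintro ⟨t, htL, hz⟩
      obtain ⟨x, hxm, rfl⟩ := Finset.mem_image.mp hz
      obtain ⟨hxA, hxn⟩ := mem_maxSet.mp hxm
      exact Finset.mem_image_of_mem _ (mem_nSet.mpr ⟨hxA, t, hxn⟩)
    · intro hz
      obtain ⟨x, hxn, rfl⟩ := Finset.mem_image.mp hz
      obtain ⟨c, hcT', hcn⟩ := hcovA x hxn
      exact ⟨c, (hmemL c).mpr hcT',
        Finset.mem_image_of_mem _ (mem_maxSet.mpr ⟨nSet_subset hxn, hcn⟩)⟩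
  have hUQ : UF Q L = (nSet B v w).image (fun x => ⟪w, x⟫) := by
    ext z
    rw [mem_UF]
    constructor
    · rintro ⟨t, htL, hz⟩
      obtain ⟨x, hxm, rfl⟩ := Finset.mem_image.mp hz
      obtain ⟨hxB, hxn⟩ := mem_maxSet.mp hxm
      exact Finset.mem_image_of_mem _ (mem_nSet.mpr ⟨hxB, t, hxn⟩)
    · intro hz
      obtain ⟨x, hxn, rfl⟩ := Finset.mem_image.mp hz
      obtain ⟨c, hcT', hcn⟩ := hcovB x hxn
      exact ⟨c, (hmemL c).mpr hcT',
        Finset.mem_image_of_mem _ (mem_maxSet.mpr ⟨nSet_subset hxn, hcn⟩)⟩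
  have hUS : UF (fun t => P t + Q t) L ⊆ (nSet (A + B) v w).image (fun x => ⟪w, x⟫) := by
    intro z hz
    obtain ⟨t, htL, hz⟩ := mem_UF.mp hz
    rw [Finset.mem_add] at hz
    obtain ⟨zp, hzp, zq, hzq, rfl⟩ := hz
    obtain ⟨xa, hxa, rfl⟩ := Finset.mem_image.mp hzp
    obtain ⟨xb, hxb, rfl⟩ := Finset.mem_image.mp hzq
    obtain ⟨hxaA, hxan⟩ := mem_maxSet.mp hxa
    obtain ⟨hxbB, hxbn⟩ := mem_maxSet.mp hxb
    have hsum : xa + xb ∈ nSet (A + B) v w := mem_nSet.mpr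
      ⟨Finset.add_mem_add hxaA hxbB, t, (extNormal_add_iff hxaA hxbB).mpr ⟨hxan, hxbn⟩⟩
    have : ⟪w, xa⟫ + ⟪w, xb⟫ = ⟪w, xa + xb⟫ := (inner_add_right w xa xb).symm
    rw [this]
    exact Finset.mem_image_of_mem _ hsum
  -- counting
  have hcount := count_lemma hPne hQne L hchain hLne
  have hcardP : (UF P L).card = (nSet A v w).card := by
    rw [hUP]
    exact Finset.card_image_of_injOn fun p hp q hq h =>
      hinjA p (nSet_subset hp) q (nSet_subset hq) h
  have hcardQ : (UF Q L).card = (nSet B v w).card := by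
    rw [hUQ]
    exact Finset.card_image_of_injOn fun p hp q hq h =>
      hinjB p (nSet_subset hp) q (nSet_subset hq) h
  have hcardS : (UF (fun t => P t + Q t) L).card ≤ (nSet (A + B) v w).card :=
    le_trans (Finset.card_le_card hUS) (Finset.card_image_le)
  omega

end BSG

namespace BSG

open Finset

lemma inner_self_pos' {u : Pt} (hu : u ≠ 0) : (0:ℝ) < ⟪u, u⟫ := by
  rcases lt_or_eq_of_le (real_inner_self_nonneg (x := u)) with h | h
  · exact h
  · exact absurd (real_inner_self_nonpos.mp h.ge) hu

lemma finset_nonempty_of_noncollinear {X : Finset Pt} (hX : ¬ Collinear ℝ (X : Set Pt)) :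
    X.Nonempty := by
  rcases X.eq_empty_or_nonempty with rfl | h
  · exact absurd (by simpa using collinear_empty ℝ Pt) hX
  · exact h

lemma interior_hull_nonempty (X : Finset Pt) (hX : ¬ Collinear ℝ (X : Set Pt)) :
    (interior (convexHull ℝ (X : Set Pt))).Nonempty := by
  have hne : (X : Set Pt).Nonempty := by
    obtain ⟨x, hx⟩ := finset_nonempty_of_noncollinear hX
    exact ⟨x, Finset.mem_coe.mpr hx⟩
  have htop : affineSpan ℝ (X : Set Pt) = ⊤ := by
    by_contra htop
    apply hX
    have hvs : vectorSpan ℝ (X : Set Pt) ≠ ⊤ := by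
      intro h
      exact htop ((AffineSubspace.affineSpan_eq_top_iff_vectorSpan_eq_top_of_nonempty ℝ Pt Pt hne).mpr h)
    have hlt : vectorSpan ℝ (X : Set Pt) < ⊤ := lt_top_iff_ne_top.mpr hvs
    have hfin := Submodule.finrank_lt (K := ℝ) (V := Pt) hvs
    rw [finrank_euclideanSpace_fin] at hfin
    exact collinear_iff_finrank_le_one.mpr (by omega)
  rw [← affineSpan_convexHull] at htop
  exact (convex_convexHull ℝ _).interior_nonempty_iff_affineSpan_eq_top.mpr htop

lemma frontier_of_normal (X : Finset Pt) {x u : Pt} (hx : x ∈ X) (hu : u ≠ 0)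
    (hn : IsExtNormal X u x) : x ∈ frontier (convexHull ℝ (X : Set Pt)) := by
  have hcl : IsClosed (convexHull ℝ (X : Set Pt)) := X.finite_toSet.isClosed_convexHull ℝ
  rw [hcl.frontier_eq]
  refine ⟨subset_convexHull ℝ _ (Finset.mem_coe.mpr hx), ?_⟩
  intro hint
  obtain ⟨ε, hε, hball⟩ := Metric.isOpen_iff.mp isOpen_interior x hint
  have hun : (0:ℝ) < ‖u‖ := norm_pos_iff.mpr hu
  set y := x + (ε / (2 * ‖u‖)) • u with hy
  have hyball : y ∈ Metric.ball x ε := by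
    rw [Metric.mem_ball, dist_eq_norm]
    have h2 : y - x = (ε / (2 * ‖u‖)) • u := by rw [hy]; abel
    rw [h2, norm_smul, Real.norm_eq_abs, abs_of_pos (by positivity)]
    have h3 : ε / (2 * ‖u‖) * ‖u‖ = ε / 2 := by field_simp
    rw [h3]; linarith
  have hyK : y ∈ convexHull ℝ (X : Set Pt) := interior_subset (hball hyball)
  have hhalf : convexHull ℝ (X : Set Pt) ⊆ {z | ⟪u, z⟫ ≤ ⟪u, x⟫} := by
    apply convexHull_min
    · intro z hz; exact hn z (Finset.mem_coe.mp hz)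
    · exact convex_halfSpace_le
        ⟨fun a b => inner_add_right u a b, fun c a => real_inner_smul_right u a c⟩ _
  have h4 := hhalf hyK
  simp only [Set.mem_setOf_eq, hy, inner_add_right, real_inner_smul_right] at h4
  have h5 : (0:ℝ) < ε / (2 * ‖u‖) * ⟪u, u⟫ := mul_pos (by positivity) (inner_self_pos' hu)
  linarith

lemma normal_of_frontier (X : Finset Pt) (hX : ¬ Collinear ℝ (X : Set Pt)) {x : Pt}
    (hfr : x ∈ frontier (convexHull ℝ (X : Set Pt))) :
    ∃ u : Pt, u ≠ 0 ∧ IsExtNormal X u x := by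
  obtain ⟨x₀, hx₀⟩ := interior_hull_nonempty X hX
  have hcl : IsClosed (convexHull ℝ (X : Set Pt)) := X.finite_toSet.isClosed_convexHull ℝ
  rw [hcl.frontier_eq] at hfr
  obtain ⟨f, hf⟩ := geometric_hahn_banach_open_point
    (convex_convexHull ℝ (X : Set Pt)).interior isOpen_interior hfr.2
  set u := (InnerProductSpace.toDual ℝ Pt).symm f with hu
  have hudef : ∀ z : Pt, ⟪u, z⟫ = f z := fun z => InnerProductSpace.toDual_symm_apply
  have hu0 : u ≠ 0 := by
    intro h
    have h1 := hf x₀ hx₀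
    have h2 : f x₀ = (0:ℝ) := by rw [← hudef x₀, h, inner_zero_left]
    have h3 : f x = (0:ℝ) := by rw [← hudef x, h, inner_zero_left]
    rw [h2, h3] at h1
    exact lt_irrefl 0 h1
  have hK : ∀ z ∈ convexHull ℝ (X : Set Pt), f z ≤ f x := by
    intro z hz
    by_contra hcon
    push_neg at hcon
    have hzx₀ : f x₀ < f x := hf x₀ hx₀
    have hD : (0:ℝ) < f z - f x := sub_pos.mpr hcon
    have hden : (0:ℝ) < f z - f x₀ := by linarith
    set θ : ℝ := (f z - f x) / (2 * (f z - f x₀)) with hθ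
    have hθpos : 0 < θ := by positivity
    have hθlt : θ < 1 := by
      rw [hθ, div_lt_one (by linarith)]
      linarith
    have hpt : θ • x₀ + (1 - θ) • z ∈ interior (convexHull ℝ (X : Set Pt)) :=
      (convex_convexHull ℝ (X : Set Pt)).combo_interior_self_mem_interior hx₀ hz hθpos
        (by linarith) (by ring)
    have h5 := hf _ hpt
    rw [map_add, map_smul, map_smul] at h5
    simp only [smul_eq_mul] at h5
    have hcalc : θ * (f z - f x₀) = (f z - f x) / 2 := by
      rw [hθ]; field_simp
    nlinarith [h5, hcalc]
  refine ⟨u, hu0, ?_⟩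
  intro y hy
  rw [hudef, hudef]
  exact hK y (subset_convexHull ℝ _ (Finset.mem_coe.mpr hy))

end BSG

namespace BSG

open Finset

set_option maxHeartbeats 1000000 in
/-- Decomposition of the boundary count into the two half-boundaries. -/
lemma bdry_decomp (X : Finset Pt) (hX : ¬ Collinear ℝ (X : Set Pt)) (v w : Pt)
    (hv : v ≠ 0) (hw : w ≠ 0) (hvw : ⟪v, w⟫ = 0)
    (hspan : ∀ u : Pt, ∃ α β : ℝ, u = α • v + β • w)
    (hinj : ∀ p ∈ X, ∀ q ∈ X, ⟪w, p⟫ = ⟪w, q⟫ → p = q) :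
    bdryCard X + 2 = (nSet X v w).card + (nSet X (-v) w).card := by
  have hXne : X.Nonempty := finset_nonempty_of_noncollinear hX
  have hvv : (0:ℝ) < ⟪v, v⟫ := inner_self_pos' hv
  have hwv : ⟪w, v⟫ = (0:ℝ) := by rw [real_inner_comm]; exact hvw
  obtain ⟨r, hrX, hrmax⟩ := X.exists_max_image (fun y => ⟪w, y⟫) hXne
  obtain ⟨l, hlX, hlmin⟩ := X.exists_min_image (fun y => ⟪w, y⟫) hXne
  have hrstrict : ∀ y ∈ X, y ≠ r → ⟪w, y⟫ < ⟪w, r⟫ := fun y hy hne =>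
    lt_of_le_of_ne (hrmax y hy) (fun h => hne (hinj y hy r hrX h))
  have hlstrict : ∀ y ∈ X, y ≠ l → ⟪w, l⟫ < ⟪w, y⟫ := fun y hy hne =>
    lt_of_le_of_ne (hlmin y hy) (fun h => hne (hinj l hlX y hy h).symm)
  have hlstrict' : ∀ y ∈ X, y ≠ l → ⟪-w, y⟫ < ⟪-w, l⟫ := by
    intro y hy hne
    rw [inner_neg_left, inner_neg_left]
    exact neg_lt_neg (hlstrict y hy hne)
  have hrl : r ≠ l := by
    intro h
    apply hX
    apply collinear_of_const_inner X w hw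
    intro p hp q hq
    have h1 : ∀ p' ∈ X, ⟪w, p'⟫ = ⟪w, r⟫ := fun p' hp' =>
      le_antisymm (hrmax p' hp') (h ▸ hlmin p' hp')
    rw [h1 p hp, h1 q hq]
  have hrunique : ∀ x ∈ X, (∀ y ∈ X, ⟪w, y⟫ ≤ ⟪w, x⟫) → x = r := by
    intro x hx hmax
    by_contra hne
    exact absurd (hmax r hrX) (not_le.mpr (hrstrict x hx hne))
  have hlunique : ∀ x ∈ X, (∀ y ∈ X, ⟪w, x⟫ ≤ ⟪w, y⟫) → x = l := by
    intro x hx hmin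
    by_contra hne
    exact absurd (hmin l hlX) (not_le.mpr (hlstrict x hx hne))
  -- membership of `r` and `l` in all half-boundaries
  have hrv : r ∈ nSet X v w := mem_nSet.mpr ⟨hrX, ray_lemma X v w hrX hrstrict⟩
  have hrv' : r ∈ nSet X (-v) w := mem_nSet.mpr ⟨hrX, ray_lemma X (-v) w hrX hrstrict⟩
  have hlv : l ∈ nSet X v w := by
    obtain ⟨t, hn⟩ := ray_lemma X v (-w) hlX hlstrict'
    refine mem_nSet.mpr ⟨hlX, -t, ?_⟩
    have h2 : v + (-t) • w = v + t • (-w) := by rw [neg_smul, smul_neg]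
    rw [h2]
    exact hn
  have hlv' : l ∈ nSet X (-v) w := by
    obtain ⟨t, hn⟩ := ray_lemma X (-v) (-w) hlX hlstrict'
    refine mem_nSet.mpr ⟨hlX, -t, ?_⟩
    have h2 : -v + (-t) • w = -v + t • (-w) := by rw [neg_smul, smul_neg]
    rw [h2]
    exact hn
  have hnz1 : ∀ t : ℝ, v + t • w ≠ 0 := by
    intro t h
    have h2 : ⟪v + t • w, v⟫ = (0:ℝ) := by rw [h, inner_zero_left]
    rw [inner_add_left, real_inner_smul_left, hwv] at h2
    nlinarith
  have hnz2 : ∀ t : ℝ, -v + t • w ≠ 0 := by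
    intro t h
    have h2 : ⟪-v + t • w, v⟫ = (0:ℝ) := by rw [h, inner_zero_left]
    rw [inner_add_left, inner_neg_left, real_inner_smul_left, hwv] at h2
    nlinarith
  -- the frontier points are exactly the two half-boundaries
  have key : X.filter (fun x => x ∈ frontier (convexHull ℝ (X : Set Pt))) =
      nSet X v w ∪ nSet X (-v) w := by
    ext x
    simp only [Finset.mem_filter, Finset.mem_union]
    constructor
    · rintro ⟨hxX, hfr⟩
      obtain ⟨u, hu0, hn⟩ := normal_of_frontier X hX hfr
      obtain ⟨α, β, huab⟩ := hspan u
      rcases lt_trichotomy α 0 with hα | hα | hα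
      · right
        refine mem_nSet.mpr ⟨hxX, β / (-α), ?_⟩
        have hsc : (1 / (-α)) • u = -v + (β / (-α)) • w := by
          rw [huab, smul_add, smul_smul, smul_smul]
          have e1 : 1 / (-α) * α = -1 := by
            field_simp
            rw [div_self (ne_of_lt hα)]
          have e2 : 1 / (-α) * β = β / (-α) := by ring
          rw [e1, e2, neg_one_smul]
        have h3 := extNormal_smul hn (c := 1 / (-α)) (one_div_pos.mpr (neg_pos.mpr hα))
        rw [hsc] at h3
        exact h3
      · subst hα
        rw [zero_smul, zero_add] at huab
        have hβ : β ≠ 0 := by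
          intro h
          rw [h, zero_smul] at huab
          exact hu0 huab
        rcases lt_or_gt_of_ne hβ with hβneg | hβpos
        · have hxl : x = l := by
            apply hlunique x hxX
            intro y hy
            have h3 := hn y hy
            rw [huab, real_inner_smul_left, real_inner_smul_left] at h3
            nlinarith
          left; rw [hxl]; exact hlv
        · have hxr : x = r := by
            apply hrunique x hxX
            intro y hy
            have h3 := hn y hy
            rw [huab, real_inner_smul_left, real_inner_smul_left] at h3
            nlinarith
          left; rw [hxr]; exact hrv
      · left
        refine mem_nSet.mpr ⟨hxX, β / α, ?_⟩
        have hsc : (1 / α) • u = v + (β / α) • w := by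
          rw [huab, smul_add, smul_smul, smul_smul]
          have e1 : 1 / α * α = 1 := by field_simp
          have e2 : 1 / α * β = β / α := by ring
          rw [e1, e2, one_smul]
        have h3 := extNormal_smul hn (c := 1 / α) (one_div_pos.mpr hα)
        rw [hsc] at h3
        exact h3
    · rintro (hx | hx)
      · obtain ⟨hxX, t, hn⟩ := mem_nSet.mp hx
        exact ⟨hxX, frontier_of_normal X hxX (hnz1 t) hn⟩
      · obtain ⟨hxX, t, hn⟩ := mem_nSet.mp hx
        exact ⟨hxX, frontier_of_normal X hxX (hnz2 t) hn⟩
  have inter : nSet X v w ∩ nSet X (-v) w = {r, l} := by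
    ext x
    simp only [Finset.mem_inter, Finset.mem_insert, Finset.mem_singleton]
    constructor
    · rintro ⟨hx1, hx2⟩
      obtain ⟨hxX, t₁, hn1⟩ := mem_nSet.mp hx1
      obtain ⟨-, t₂, hn2⟩ := mem_nSet.mp hx2
      have hsum : ∀ y ∈ X, (t₁ + t₂) * ⟪w, y⟫ ≤ (t₁ + t₂) * ⟪w, x⟫ := by
        intro y hy
        have h1 := hn1 y hy
        have h2 := hn2 y hy
        simp only [inner_add_left, inner_neg_left, real_inner_smul_left] at h1 h2
        nlinarith
      rcases lt_trichotomy (t₁ + t₂) 0 with hc | hc | hc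
      · right
        apply hlunique x hxX
        intro y hy
        have h3 := hsum y hy
        nlinarith
      · exfalso
        apply hX
        apply collinear_of_const_inner X (v + t₁ • w) (hnz1 t₁)
        intro p hp q hq
        have ht2 : t₂ = -t₁ := by linarith
        have e : -v + t₂ • w = -(v + t₁ • w) := by rw [ht2, neg_add, neg_smul]
        have h1 := hn1 p hp
        have h2 := hn1 q hq
        have h3 := hn2 p hp
        have h4 := hn2 q hq
        rw [e, inner_neg_left, inner_neg_left] at h3 h4
        linarith
      · left
        apply hrunique x hxX
        intro y hy
        have h3 := hsum y hy
        nlinarith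
    · rintro (rfl | rfl)
      · exact ⟨hrv, hrv'⟩
      · exact ⟨hlv, hlv'⟩
  have hcard2 : ({r, l} : Finset Pt).card = 2 := by
    rw [Finset.card_insert_of_notMem (by simp [hrl]), Finset.card_singleton]
  have hui := Finset.card_union_add_card_inter (nSet X v w) (nSet X (-v) w)
  rw [inter, hcard2] at hui
  unfold bdryCard
  rw [key]
  omega

end BSG

namespace BSG

open Finset

lemma collinear_shift {A : Finset Pt} {b₀ : Pt} (hne : A.Nonempty)
    (h : Collinear ℝ ((fun a => a + b₀) '' (A : Set Pt))) : Collinear ℝ (A : Set Pt) := by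
  obtain ⟨a₀, ha₀⟩ := hne
  have hmem : a₀ + b₀ ∈ (fun a => a + b₀) '' (A : Set Pt) :=
    ⟨a₀, Finset.mem_coe.mpr ha₀, rfl⟩
  rw [collinear_iff_of_mem hmem] at h
  obtain ⟨dir, hdir⟩ := h
  rw [collinear_iff_of_mem (Finset.mem_coe.mpr ha₀)]
  refine ⟨dir, ?_⟩
  intro p hp
  obtain ⟨c, hc⟩ := hdir (p + b₀) ⟨p, hp, rfl⟩
  refine ⟨c, ?_⟩
  have h2 : p + b₀ = (c • dir + a₀) + b₀ := by
    rw [hc]; rw [vadd_eq_add]; abel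
  have h3 : p = c • dir + a₀ := add_right_cancel h2
  rw [vadd_eq_add]
  exact h3

end BSG

theorem bdry_sum_ge
    (A B : Finset Pt) (hA : ¬ Collinear ℝ (A : Set Pt)) (hB : ¬ Collinear ℝ (B : Set Pt)) :
    bdryCard (A + B) ≥ bdryCard A + bdryCard B := by
  classical
  obtain ⟨a₀, ha₀⟩ := BSG.finset_nonempty_of_noncollinear hA
  obtain ⟨b₀, hb₀⟩ := BSG.finset_nonempty_of_noncollinear hB
  have hABcol : ¬ Collinear ℝ ((A + B : Finset Pt) : Set Pt) := by
    intro h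
    apply hA
    apply BSG.collinear_shift ⟨a₀, ha₀⟩ (b₀ := b₀)
    apply h.subset
    rintro _ ⟨a, ha, rfl⟩
    exact Finset.mem_coe.mpr (Finset.add_mem_add (Finset.mem_coe.mp ha) hb₀)
  set Bad : Finset ℝ :=
    ((A + B) ×ˢ (A + B)).image (fun pq => (pq.1 1 - pq.2 1) / (pq.1 0 - pq.2 0)) with hBad
  obtain ⟨s, hs⟩ := Infinite.exists_notMem_finset Bad
  set v : Pt := BSG.mk2 1 s with hv
  set w : Pt := BSG.mk2 s (-1) with hw
  have hv0 : v ≠ 0 := by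
    intro h
    have h0 : v 0 = (0:ℝ) := by rw [h]; rfl
    rw [hv] at h0
    simp at h0
  have hw0 : w ≠ 0 := by
    intro h
    have h0 : w 1 = (0:ℝ) := by rw [h]; rfl
    rw [hw] at h0
    simp at h0
  have hvw : ⟪v, w⟫ = (0:ℝ) := by
    rw [BSG.inner2]
    simp only [hv, hw, BSG.mk2_0, BSG.mk2_1]
    ring
  have hspan : ∀ u : Pt, ∃ α β : ℝ, u = α • v + β • w := by
    intro u
    have hden : (1:ℝ) + s ^ 2 ≠ 0 := by positivity
    refine ⟨(u 0 + s * u 1) / (1 + s ^ 2), (s * u 0 - u 1) / (1 + s ^ 2), BSG.ext2 ?_ ?_⟩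
    · simp only [hv, hw, PiLp.add_apply, PiLp.smul_apply, BSG.mk2_0, BSG.mk2_1, smul_eq_mul]
      field_simp
      ring
    · simp only [hv, hw, PiLp.add_apply, PiLp.smul_apply, BSG.mk2_0, BSG.mk2_1, smul_eq_mul]
      field_simp
      ring
  have hinj : ∀ p ∈ A + B, ∀ q ∈ A + B, ⟪w, p⟫ = ⟪w, q⟫ → p = q := by
    intro p hp q hq h
    rw [BSG.inner2, BSG.inner2] at h
    simp only [hw, BSG.mk2_0, BSG.mk2_1] at h
    by_contra hne
    by_cases h00 : p 0 = q 0
    · exact hne (BSG.ext2 h00 (by rw [h00] at h; linarith))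
    · apply hs
      rw [hBad]
      refine Finset.mem_image.mpr ⟨(p, q), Finset.mem_product.mpr ⟨hp, hq⟩, ?_⟩
      show (p 1 - q 1) / (p 0 - q 0) = s
      rw [div_eq_iff (sub_ne_zero.mpr h00)]
      linarith
  have hinjA := BSG.inj_left hinj hb₀
  have hinjB := BSG.inj_right hinj ha₀
  have eqA := BSG.bdry_decomp A hA v w hv0 hw0 hvw hspan hinjA
  have eqB := BSG.bdry_decomp B hB v w hv0 hw0 hvw hspan hinjB
  have eqAB := BSG.bdry_decomp (A + B) hABcol v w hv0 hw0 hvw hspan hinj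
  have ineq1 := BSG.nSet_card_lemma A B ⟨a₀, ha₀⟩ ⟨b₀, hb₀⟩ v w hinj
  have ineq2 := BSG.nSet_card_lemma A B ⟨a₀, ha₀⟩ ⟨b₀, hb₀⟩ (-v) w hinj
  omega
end
end

section
/- Let A and B be finite non-collinear subsets of ℝ² such that every point of A + B has a unique representation, i.e., whenever a₁ + b₁ = a₂ + b₂ with a₁, a₂ ∈ A and b₁, b₂ ∈ B, one has a₁ = a₂ and b₁ = b₂. Then √(2 i_{A+B} + b_{A+B} − 2) ≥ √(2 i_A + b_A − 2) + √(2 i_B + b_B − 2). -/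
open scoped Pointwise Classical RealInnerProductSpace

noncomputable section

/-! ### Auxiliary lemmas -/

/-- Every point of `C` is either in the interior or on the frontier of the hull. -/
theorem aux_intCard_add_bdryCard (C : Finset Pt) : intCard C + bdryCard C = C.card := by
  classical
  unfold intCard bdryCard
  have h : ∀ x ∈ C, ((¬ x ∈ frontier (convexHull ℝ (C : Set Pt))) ↔
      x ∈ interior (convexHull ℝ (C : Set Pt))) := by
    intro x hx
    have hcl : x ∈ closure (convexHull ℝ (C : Set Pt)) :=
      subset_closure (subset_convexHull ℝ _ hx)
    rw [frontier, Set.mem_diff]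
    constructor
    · intro hf; by_contra hi; exact hf ⟨hcl, hi⟩
    · intro hi hf; exact hf.2 hi
  have key := Finset.card_filter_add_card_filter_not
    (s := C) (p := fun x => x ∈ frontier (convexHull ℝ (C : Set Pt)))
  rw [Finset.filter_congr h] at key
  simpa [add_comm] using key

/-- A point of `A + B` on the frontier of the hull of `A + B` decomposes into
frontier points of the hulls of `A` and `B`. -/
theorem aux_frontier_add (A B : Finset Pt) (a b : Pt) (ha : a ∈ A) (hb : b ∈ B)
    (hf : a + b ∈ frontier (convexHull ℝ ((A + B : Finset Pt) : Set Pt))) :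
    a ∈ frontier (convexHull ℝ (A : Set Pt)) ∧ b ∈ frontier (convexHull ℝ (B : Set Pt)) := by
  have hcoe : ((A + B : Finset Pt) : Set Pt) = (A : Set Pt) + (B : Set Pt) := Finset.coe_add A B
  have hhull : convexHull ℝ ((A + B : Finset Pt) : Set Pt)
      = convexHull ℝ (A : Set Pt) + convexHull ℝ (B : Set Pt) := by
    rw [hcoe, convexHull_add]
  have hnotint : a + b ∉ interior (convexHull ℝ ((A + B : Finset Pt) : Set Pt)) := by
    rw [frontier, Set.mem_diff] at hf; exact hf.2
  have hA' : a ∉ interior (convexHull ℝ (A : Set Pt)) := by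
    intro hai
    apply hnotint
    have hopen : IsOpen (interior (convexHull ℝ (A : Set Pt)) + convexHull ℝ (B : Set Pt)) :=
      isOpen_interior.add_right
    have hsub : interior (convexHull ℝ (A : Set Pt)) + convexHull ℝ (B : Set Pt)
        ⊆ convexHull ℝ ((A + B : Finset Pt) : Set Pt) := by
      rw [hhull]; exact Set.add_subset_add_right interior_subset
    exact interior_maximal hsub hopen
      (Set.add_mem_add hai (subset_convexHull ℝ _ hb))
  have hB' : b ∉ interior (convexHull ℝ (B : Set Pt)) := by
    intro hbi
    apply hnotint
    have hopen : IsOpen (convexHull ℝ (A : Set Pt) + interior (convexHull ℝ (B : Set Pt))) :=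
      isOpen_interior.add_left
    have hsub : convexHull ℝ (A : Set Pt) + interior (convexHull ℝ (B : Set Pt))
        ⊆ convexHull ℝ ((A + B : Finset Pt) : Set Pt) := by
      rw [hhull]; exact Set.add_subset_add_left interior_subset
    exact interior_maximal hsub hopen
      (Set.add_mem_add (subset_convexHull ℝ _ ha) hbi)
  exact ⟨⟨subset_closure (subset_convexHull ℝ _ ha), hA'⟩,
    ⟨subset_closure (subset_convexHull ℝ _ hb), hB'⟩⟩

/-- The boundary count of a sumset is at most the product of the boundary counts. -/
theorem aux_bdryCard_add_le (A B : Finset Pt) :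
    bdryCard (A + B) ≤ bdryCard A * bdryCard B := by
  classical
  unfold bdryCard
  have hsub : ((A + B : Finset Pt).filter fun x =>
        x ∈ frontier (convexHull ℝ ((A + B : Finset Pt) : Set Pt)))
      ⊆ (A.filter fun x => x ∈ frontier (convexHull ℝ (A : Set Pt)))
        + (B.filter fun x => x ∈ frontier (convexHull ℝ (B : Set Pt))) := by
    intro c hc
    rw [Finset.mem_filter] at hc
    obtain ⟨hcAB, hcf⟩ := hc
    rw [Finset.mem_add] at hcAB
    obtain ⟨a, ha, b, hb, hab⟩ := hcAB
    subst hab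
    obtain ⟨haf, hbf⟩ := aux_frontier_add A B a b ha hb hcf
    exact Finset.add_mem_add (Finset.mem_filter.mpr ⟨ha, haf⟩)
      (Finset.mem_filter.mpr ⟨hb, hbf⟩)
  exact le_trans (Finset.card_le_card hsub) (Finset.card_add_le)

/-- A maximizer of a linear functional over `A` lies on the frontier of the hull of `A`. -/
theorem aux_frontier_of_max (A : Finset Pt) (x : Pt) (hx : x ∈ A)
    (f : Pt → ℝ) (hf : IsLinearMap ℝ f) (w : Pt) (hfw : 0 < f w)
    (hmax : ∀ a ∈ A, f a ≤ f x) : x ∈ frontier (convexHull ℝ (A : Set Pt)) := by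
  have hhalf : convexHull ℝ (A : Set Pt) ⊆ {p | f p ≤ f x} :=
    convexHull_min (fun a ha => hmax a ha) (convex_halfSpace_le hf (f x))
  refine ⟨subset_closure (subset_convexHull ℝ _ hx), ?_⟩
  intro hi
  rw [mem_interior_iff_mem_nhds, Metric.mem_nhds_iff] at hi
  obtain ⟨ε, hε, hball⟩ := hi
  have hw0 : w ≠ 0 := by
    intro h; rw [h, hf.map_zero] at hfw; exact lt_irrefl 0 hfw
  set δ : ℝ := ε / (2 * ‖w‖) with hδdef
  have hwn : 0 < ‖w‖ := norm_pos_iff.mpr hw0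
  have hδ : 0 < δ := by positivity
  have hkey : ‖w‖ * δ = ε / 2 := by
    rw [hδdef]; field_simp
  have hz : x + δ • w ∈ Metric.ball x ε := by
    rw [Metric.mem_ball, dist_eq_norm]
    have h1 : x + δ • w - x = δ • w := by abel
    rw [h1, norm_smul, Real.norm_eq_abs, abs_of_pos hδ, mul_comm, hkey]
    linarith
  have := hhalf (hball hz)
  simp only [Set.mem_setOf_eq] at this
  rw [hf.map_add, hf.map_smul, smul_eq_mul] at this
  nlinarith

/-- A non-collinear finite set has at least two points on the frontier of its hull. -/
theorem aux_two_le_bdryCard (A : Finset Pt) (hA : ¬ Collinear ℝ (A : Set Pt)) :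
    2 ≤ bdryCard A := by
  classical
  have hne : A.Nonempty := by
    rcases A.eq_empty_or_nonempty with h | h
    · exfalso; apply hA; rw [h]; simp [collinear_empty]
    · exact h
  set f : Pt → ℝ := fun p => p 0 with hfdef
  have hf : IsLinearMap ℝ f := ⟨fun x y => rfl, fun c x => rfl⟩
  obtain ⟨x, hxA, hxmax⟩ := A.exists_max_image f hne
  obtain ⟨y, hyA, hymin⟩ := A.exists_min_image f hne
  have hxy : f y < f x := by
    rcases lt_or_ge (f y) (f x) with h | h
    · exact h
    · exfalso
      apply hA
      have hall : ∀ p ∈ A, f p = f x := by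
        intro p hp
        have := hxmax p hp
        have := hymin p hp
        have := hymin x hxA
        linarith
      rw [collinear_iff_of_mem (Finset.mem_coe.mpr hxA)]
      refine ⟨EuclideanSpace.single (1 : Fin 2) (1 : ℝ), fun p hp => ⟨p 1 - x 1, ?_⟩⟩
      have hp0 : p 0 = x 0 := hall p hp
      have h2 : (p 1 - x 1) • (EuclideanSpace.single (1 : Fin 2) (1:ℝ)) +ᵥ x = p := by
        ext i
        fin_cases i <;>
          simp [EuclideanSpace.single_apply, PiLp.smul_apply, PiLp.add_apply, vadd_eq_add, hp0]
      exact h2.symm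
  have hnegf : IsLinearMap ℝ (fun p : Pt => -(f p)) :=
    ⟨fun a b => by rw [hf.map_add]; ring, fun c a => by rw [hf.map_smul]; simp⟩
  have hxfr : x ∈ frontier (convexHull ℝ (A : Set Pt)) := by
    apply aux_frontier_of_max A x hxA f hf (EuclideanSpace.single (0 : Fin 2) (1 : ℝ))
    · simp [hfdef, EuclideanSpace.single_apply]
    · exact hxmax
  have hyfr : y ∈ frontier (convexHull ℝ (A : Set Pt)) := by
    apply aux_frontier_of_max A y hyA (fun p => -(f p)) hnegf
      (-(EuclideanSpace.single (0 : Fin 2) (1 : ℝ)))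
    · simp [hfdef, EuclideanSpace.single_apply, PiLp.neg_apply]
    · intro a ha; simpa using hymin a ha
  have hxyne : x ≠ y := fun h => by rw [h] at hxy; exact lt_irrefl _ hxy
  unfold bdryCard
  have h1 : 1 < (A.filter fun p => p ∈ frontier (convexHull ℝ (A : Set Pt))).card :=
    Finset.one_lt_card.mpr
      ⟨x, Finset.mem_filter.mpr ⟨hxA, hxfr⟩, y, Finset.mem_filter.mpr ⟨hyA, hyfr⟩, hxyne⟩
  omega

/-- With unique representation the sumset has full cardinality. -/
theorem aux_card_add (A B : Finset Pt)
    (huniq : ∀ a₁ ∈ A, ∀ b₁ ∈ B, ∀ a₂ ∈ A, ∀ b₂ ∈ B,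
      a₁ + b₁ = a₂ + b₂ → a₁ = a₂ ∧ b₁ = b₂) :
    (A + B).card = A.card * B.card := by
  classical
  rw [Finset.add_def, Finset.card_image_of_injOn, Finset.card_product]
  intro p hp q hq hpq
  simp only [Finset.coe_product, Set.mem_prod, Finset.mem_coe] at hp hq
  obtain ⟨h1, h2⟩ := huniq p.1 hp.1 p.2 hp.2 q.1 hq.1 q.2 hq.2 hpq
  exact Prod.ext h1 h2

theorem sqrt_tr_unique_representation
    (A B : Finset Pt) (hA : ¬ Collinear ℝ (A : Set Pt)) (hB : ¬ Collinear ℝ (B : Set Pt))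
    (huniq : ∀ a₁ ∈ A, ∀ b₁ ∈ B, ∀ a₂ ∈ A, ∀ b₂ ∈ B,
      a₁ + b₁ = a₂ + b₂ → a₁ = a₂ ∧ b₁ = b₂) :
    Real.sqrt (2 * (intCard (A + B) : ℝ) + (bdryCard (A + B) : ℝ) - 2) ≥
      Real.sqrt (2 * (intCard A : ℝ) + (bdryCard A : ℝ) - 2) +
        Real.sqrt (2 * (intCard B : ℝ) + (bdryCard B : ℝ) - 2) := by
  classical
  have c1 : (intCard A : ℝ) + (bdryCard A : ℝ) = (A.card : ℝ) := by
    exact_mod_cast aux_intCard_add_bdryCard A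
  have c2 : (intCard B : ℝ) + (bdryCard B : ℝ) = (B.card : ℝ) := by
    exact_mod_cast aux_intCard_add_bdryCard B
  have c3 : (intCard (A + B) : ℝ) + (bdryCard (A + B) : ℝ) = (A.card : ℝ) * (B.card : ℝ) := by
    have h := aux_intCard_add_bdryCard (A + B)
    rw [aux_card_add A B huniq] at h
    exact_mod_cast h
  have ha2 : (2 : ℝ) ≤ (bdryCard A : ℝ) := by exact_mod_cast aux_two_le_bdryCard A hA
  have hb2 : (2 : ℝ) ≤ (bdryCard B : ℝ) := by exact_mod_cast aux_two_le_bdryCard B hB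
  have ham : (bdryCard A : ℝ) ≤ (A.card : ℝ) := by
    have : bdryCard A ≤ A.card := Finset.card_filter_le _ _
    exact_mod_cast this
  have hbn : (bdryCard B : ℝ) ≤ (B.card : ℝ) := by
    have : bdryCard B ≤ B.card := Finset.card_filter_le _ _
    exact_mod_cast this
  have hβ : (bdryCard (A + B) : ℝ) ≤ (bdryCard A : ℝ) * (bdryCard B : ℝ) := by
    exact_mod_cast aux_bdryCard_add_le A B
  set m : ℝ := (A.card : ℝ) with hm
  set n : ℝ := (B.card : ℝ) with hn
  set a : ℝ := (bdryCard A : ℝ) with ha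
  set b : ℝ := (bdryCard B : ℝ) with hb
  set β : ℝ := (bdryCard (A + B) : ℝ) with hβdef
  set X : ℝ := 2 * m - a - 2 with hXdef
  set Y : ℝ := 2 * n - b - 2 with hYdef
  set S : ℝ := 2 * (m * n) - β - 2 with hSdef
  have hX0 : 0 ≤ X := by rw [hXdef]; linarith
  have hY0 : 0 ≤ Y := by rw [hYdef]; linarith
  have hkey : 2 * X + 2 * Y ≤ S := by
    rw [hXdef, hYdef, hSdef]
    have e1 : 0 ≤ (m - a) * (n - b) := mul_nonneg (by linarith) (by linarith)
    have e2 : 0 ≤ (a - 2) * (b - 2) := mul_nonneg (by linarith) (by linarith)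
    have e3 : 0 ≤ (m - a) * (b - 2) := mul_nonneg (by linarith) (by linarith)
    have e4 : 0 ≤ (n - b) * (a - 2) := mul_nonneg (by linarith) (by linarith)
    nlinarith [e1, e2, e3, e4]
  have hsq : (Real.sqrt X + Real.sqrt Y) ^ 2 ≤ S := by
    have h1 : Real.sqrt X ^ 2 = X := Real.sq_sqrt hX0
    have h2 : Real.sqrt Y ^ 2 = Y := Real.sq_sqrt hY0
    nlinarith [sq_nonneg (Real.sqrt X - Real.sqrt Y), Real.sqrt_nonneg X, Real.sqrt_nonneg Y]
  have hfinal : Real.sqrt X + Real.sqrt Y ≤ Real.sqrt S := by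
    have h := Real.sqrt_le_sqrt hsq
    rwa [Real.sqrt_sq (by positivity)] at h
  have g1 : 2 * (intCard A : ℝ) + a - 2 = X := by rw [hXdef]; linarith
  have g2 : 2 * (intCard B : ℝ) + b - 2 = Y := by rw [hYdef]; linarith
  have g3 : 2 * (intCard (A + B) : ℝ) + β - 2 = S := by rw [hSdef]; linarith
  rw [ge_iff_le, g1, g2, g3]
  exact hfinal
end
end

section
/- Let A and B be finite non-collinear subsets of ℝ² with i_A = i_B = 1, i.e., each of A and B has exactly one point in the interior of its convex hull. Then √(2 i_{A+B} + b_{A+B} − 2) ≥ √(2 i_A + b_A − 2) + √(2 i_B + b_B − 2). -/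
open scoped Pointwise Classical RealInnerProductSpace

noncomputable section

-- ==== auxiliary lemmas ====

lemma perp_apply0 (v : Pt) : perp v 0 = v 1 := rfl
lemma perp_apply1 (v : Pt) : perp v 1 = -(v 0) := rfl

lemma inner_coords (x y : Pt) : ⟪x, y⟫ = x 0 * y 0 + x 1 * y 1 := by
  simp [PiLp.inner_apply, Fin.sum_univ_two, RCLike.inner_apply, conj_trivial]; ring

lemma inner_perp_self (v : Pt) : ⟪perp v, v⟫ = 0 := by
  rw [inner_coords, perp_apply0, perp_apply1]; ring

lemma inner_self_perp (v : Pt) : ⟪v, perp v⟫ = 0 := by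
  rw [inner_coords, perp_apply0, perp_apply1]; ring

lemma norm_perp (v : Pt) : ‖perp v‖ = ‖v‖ := by
  rw [← Real.sqrt_sq (norm_nonneg (perp v)), ← Real.sqrt_sq (norm_nonneg v)]
  congr 1
  rw [← real_inner_self_eq_norm_sq, ← real_inner_self_eq_norm_sq, inner_coords, inner_coords,
    perp_apply0, perp_apply1]
  ring

lemma inner_perp_antisymm (v w : Pt) : ⟪perp v, w⟫ = -⟪perp w, v⟫ := by
  rw [inner_coords, inner_coords, perp_apply0, perp_apply1, perp_apply0, perp_apply1]; ring

/-- In `ℝ²`, a vector orthogonal to `u ≠ 0` is a multiple of `perp u`. -/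
lemma eq_smul_perp_of_inner_eq_zero {u v : Pt} (hu : u ≠ 0) (h : ⟪u, v⟫ = 0) :
    ∃ t : ℝ, v = t • perp u := by
  rw [inner_coords] at h
  by_cases h0 : u 0 = 0
  · have h1 : u 1 ≠ 0 := by
      intro h1; apply hu; ext i; fin_cases i <;> simp [h0, h1]
    refine ⟨v 0 / u 1, ?_⟩
    ext i
    fin_cases i
    · simp [perp_apply0]; field_simp
    · show v 1 = (v 0 / u 1) * (perp u 1)
      rw [perp_apply1, h0]
      have hz : u 1 * v 1 = 0 := by rw [h0, zero_mul, zero_add] at h; exact h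
      have : v 1 = 0 := (mul_eq_zero.1 hz).resolve_left h1
      simp [this]
  · refine ⟨-(v 1) / u 0, ?_⟩
    ext i
    fin_cases i
    · show v 0 = (-(v 1) / u 0) * (perp u 0)
      rw [perp_apply0]
      field_simp
      nlinarith [h]
    · show v 1 = (-(v 1) / u 0) * (perp u 1)
      rw [perp_apply1]
      field_simp

lemma perp_smul (c : ℝ) (v : Pt) : perp (c • v) = c • perp v := by
  ext i
  fin_cases i
  · show perp (c • v) 0 = c * perp v 0
    rw [perp_apply0, perp_apply0]; rfl
  · show perp (c • v) 1 = c * perp v 1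
    rw [perp_apply1, perp_apply1]
    show -(c * v 0) = c * -(v 0); ring

lemma perp_add (v w : Pt) : perp (v + w) = perp v + perp w := by
  ext i
  fin_cases i
  · show perp (v + w) 0 = perp v 0 + perp w 0
    rw [perp_apply0, perp_apply0, perp_apply0]; rfl
  · show perp (v + w) 1 = perp v 1 + perp w 1
    rw [perp_apply1, perp_apply1, perp_apply1]
    show -(v 0 + w 0) = -(v 0) + -(w 0); ring

lemma perp_perp (v : Pt) : perp (perp v) = -v := by
  ext i
  fin_cases i
  · show perp (perp v) 0 = -(v 0)
    rw [perp_apply0, perp_apply1]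
  · show perp (perp v) 1 = -(v 1)
    rw [perp_apply1, perp_apply0]

lemma mem_maxSet {A : Finset Pt} {u x : Pt} :
    x ∈ maxSet A u ↔ x ∈ A ∧ IsExtNormal A u x := by
  simp [maxSet, IsExtNormal]

lemma maxSet_subset (A : Finset Pt) (u : Pt) : maxSet A u ⊆ A := Finset.filter_subset _ _

lemma maxSet_nonempty {A : Finset Pt} (hA : A.Nonempty) (u : Pt) : (maxSet A u).Nonempty := by
  obtain ⟨x, hx, hmax⟩ := A.exists_max_image (fun y => ⟪u, y⟫) hA
  exact ⟨x, mem_maxSet.2 ⟨hx, hmax⟩⟩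

/-- Max over the convex hull is attained on `A`. -/
lemma inner_le_of_mem_convexHull {A : Finset Pt} {u x : Pt} (h : IsExtNormal A u x)
    {y : Pt} (hy : y ∈ convexHull ℝ (A : Set Pt)) : ⟪u, y⟫ ≤ ⟪u, x⟫ := by
  have : convexHull ℝ (A : Set Pt) ⊆ {z : Pt | ⟪u, z⟫ ≤ ⟪u, x⟫} := by
    apply convexHull_min
    · intro z hz; exact h z (by exact_mod_cast hz)
    · exact convex_halfSpace_le ⟨fun a b => inner_add_right u a b, fun c a => real_inner_smul_right u a c⟩ _
  exact this hy

/-- A point of `A` with a nonzero exterior normal is on the frontier. -/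
lemma mem_frontier_of_isExtNormal {A : Finset Pt} {u x : Pt} (hx : x ∈ A) (hu : u ≠ 0)
    (h : IsExtNormal A u x) : x ∈ frontier (convexHull ℝ (A : Set Pt)) := by
  have hxhull : x ∈ convexHull ℝ (A : Set Pt) := subset_convexHull ℝ _ hx
  rw [frontier, (A.finite_toSet.isClosed_convexHull ℝ).closure_eq]
  refine ⟨hxhull, fun hint => ?_⟩
  rw [mem_interior_iff_mem_nhds, Metric.mem_nhds_iff] at hint
  obtain ⟨ε, hε, hball⟩ := hint
  have hy : x + (ε / 2 / ‖u‖) • u ∈ convexHull ℝ (A : Set Pt) := by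
    apply hball
    rw [Metric.mem_ball, dist_eq_norm]
    have : ‖x + (ε / 2 / ‖u‖) • u - x‖ = ε / 2 := by
      rw [add_sub_cancel_left, norm_smul]
      have hn : ‖u‖ > 0 := norm_pos_iff.2 hu
      rw [Real.norm_eq_abs, abs_of_pos (by positivity)]
      field_simp
    rw [this]; linarith
  have := inner_le_of_mem_convexHull h hy
  rw [inner_add_right, real_inner_smul_right, real_inner_self_eq_norm_sq] at this
  have hn : (0:ℝ) < ‖u‖ := norm_pos_iff.2 hu
  have : (0:ℝ) < ε / 2 / ‖u‖ * ‖u‖ ^ 2 := by positivity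
  linarith

lemma not_collinear_nonempty {A : Finset Pt} (hA : ¬ Collinear ℝ (A : Set Pt)) : A.Nonempty := by
  rcases A.eq_empty_or_nonempty with h | h
  · exact absurd (by rw [h]; simp [collinear_empty]) hA
  · exact h

lemma interior_hull_nonempty {A : Finset Pt} (hA : ¬ Collinear ℝ (A : Set Pt)) :
    (interior (convexHull ℝ (A : Set Pt))).Nonempty := by
  rw [(convex_convexHull ℝ _).interior_nonempty_iff_affineSpan_eq_top, affineSpan_convexHull]
  by_contra htop
  apply hA
  have hne : (A : Set Pt).Nonempty := not_collinear_nonempty hA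
  rw [AffineSubspace.affineSpan_eq_top_iff_vectorSpan_eq_top_of_nonempty ℝ Pt Pt hne] at htop
  have hlt : vectorSpan ℝ (A : Set Pt) < ⊤ := lt_top_iff_ne_top.2 htop
  have hfr : Module.finrank ℝ (vectorSpan ℝ (A : Set Pt)) < Module.finrank ℝ Pt := by
    have := Submodule.finrank_lt_finrank_of_lt hlt
    rwa [finrank_top] at this
  rw [collinear_iff_finrank_le_one]
  have : Module.finrank ℝ Pt = 2 := finrank_euclideanSpace_fin
  omega

/-- A frontier point of the hull of a non-collinear finite set has a unit exterior normal. -/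
lemma exists_unit_normal_of_frontier {A : Finset Pt} (hA : ¬ Collinear ℝ (A : Set Pt))
    {x : Pt} (hxA : x ∈ A) (hx : x ∈ frontier (convexHull ℝ (A : Set Pt))) :
    ∃ u : Pt, ‖u‖ = 1 ∧ IsExtNormal A u x := by
  set s := convexHull ℝ (A : Set Pt)
  have hconv : Convex ℝ s := convex_convexHull ℝ _
  have hint : (interior s).Nonempty := interior_hull_nonempty hA
  have hxnotint : x ∉ interior s := by
    have h2 := hx
    rw [frontier, ((A.finite_toSet.isClosed_convexHull ℝ).closure_eq : closure s = s)] at h2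
    exact h2.2
  obtain ⟨f, hf⟩ := geometric_hahn_banach_open_point hconv.interior isOpen_interior hxnotint
  -- f y < f x for all y in interior s; extend to all of s
  have hfs : ∀ y ∈ s, f y ≤ f x := by
    intro y hy
    obtain ⟨y₀, hy₀⟩ := hint
    by_contra hlt
    push_neg at hlt
    -- points (1-t)y + t y₀ are in interior for t ∈ (0,1]
    have key : ∀ t : ℝ, 0 < t → t ≤ 1 → f ((1 - t) • y + t • y₀) < f x := by
      intro t ht ht1
      apply hf
      exact hconv.combo_self_interior_mem_interior hy hy₀ (by linarith) ht (by ring)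
    -- choose t small
    have hcontf : Continuous (fun t : ℝ => f ((1 - t) • y + t • y₀)) := by
      apply f.continuous.comp
      exact ((continuous_const.sub continuous_id).smul continuous_const).add
        (continuous_id.smul continuous_const)
    have hcont := (hcontf.tendsto (0:ℝ)).mono_left
      (nhdsWithin_le_nhds (s := Set.Ioi (0:ℝ)))
    simp only [sub_zero, one_smul, zero_smul, add_zero] at hcont
    have hev : ∀ᶠ t in nhdsWithin (0:ℝ) (Set.Ioi 0), f x < f ((1 - t) • y + t • y₀) :=
      hcont.eventually_const_lt hlt
    have hev2 : ∀ᶠ t in nhdsWithin (0:ℝ) (Set.Ioi 0), t ≤ 1 ∧ 0 < t := by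
      filter_upwards [Ioo_mem_nhdsGT_of_mem (Set.left_mem_Ico.2 one_pos), self_mem_nhdsWithin]
        with t h1 h2
      exact ⟨le_of_lt h1.2, h2⟩
    obtain ⟨t, ht1, ht2⟩ := (hev.and hev2).exists
    exact absurd (key t ht2.2 ht2.1) (not_lt.2 (le_of_lt ht1))
  have hfne : f ≠ 0 := by
    intro h0
    obtain ⟨y₀, hy₀⟩ := hint
    have := hf y₀ hy₀
    rw [h0] at this
    simp at this
  -- convert to inner product
  set u := (InnerProductSpace.toDual ℝ Pt).symm f with hu
  have huf : ∀ y : Pt, ⟪u, y⟫ = f y := fun y => InnerProductSpace.toDual_symm_apply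
  have hune : u ≠ 0 := by
    intro h0
    apply hfne
    ext y
    have := huf y
    rw [h0] at this
    simpa using this.symm
  refine ⟨‖u‖⁻¹ • u, ?_, ?_⟩
  · have hpos : (0:ℝ) < ‖u‖ := norm_pos_iff.2 hune
    rw [norm_smul, Real.norm_eq_abs, abs_of_pos (by positivity : (0:ℝ) < ‖u‖⁻¹)]
    field_simp
  · intro y hy
    rw [real_inner_smul_left, real_inner_smul_left, huf, huf]
    have : f y ≤ f x := hfs y (subset_convexHull ℝ _ hy)
    have hpos : (0:ℝ) < ‖u‖⁻¹ := by
      have : (0:ℝ) < ‖u‖ := norm_pos_iff.2 hune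
      positivity
    exact mul_le_mul_of_nonneg_left this (le_of_lt hpos)


lemma isExtNormal_congr {A : Finset Pt} {u p q : Pt} (hp : IsExtNormal A u p)
    (hq : q ∈ A) (hpq : ⟪u, p⟫ ≤ ⟪u, q⟫) : IsExtNormal A u q :=
  fun y hy => le_trans (hp y hy) hpq

/-- Rotation lemma: from any unit exterior normal at `p` we can rotate to a unit
exterior normal `u` at `p` such that some point of `maxSet A u` lies strictly
beyond `p` in the `perp u` direction. -/
lemma rotate_normal {A : Finset Pt} (hA : ¬ Collinear ℝ (A : Set Pt)) {p u₀ : Pt}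
    (hp : p ∈ A) (hu₀ : ‖u₀‖ = 1) (hn : IsExtNormal A u₀ p) :
    ∃ u : Pt, ‖u‖ = 1 ∧ IsExtNormal A u p ∧ ∃ q ∈ maxSet A u, ⟪perp u, p⟫ < ⟪perp u, q⟫ := by
  set w₀ := perp u₀ with hw₀
  set U : ℝ → Pt := fun θ => Real.cos θ • u₀ + Real.sin θ • w₀ with hU
  have hu₀ne : u₀ ≠ 0 := by
    intro h; rw [h, norm_zero] at hu₀; norm_num at hu₀
  have hinner : ∀ θ z, ⟪U θ, z⟫ = Real.cos θ * ⟪u₀, z⟫ + Real.sin θ * ⟪w₀, z⟫ := by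
    intro θ z
    rw [hU]
    simp only [inner_add_left, real_inner_smul_left]
  have hperpU : ∀ θ, perp (U θ) = Real.cos θ • w₀ - Real.sin θ • u₀ := by
    intro θ
    rw [hU]
    show perp (Real.cos θ • u₀ + Real.sin θ • w₀) = _
    rw [perp_add, perp_smul, perp_smul, ← hw₀, hw₀, perp_perp, smul_neg]
    abel
  have hUnorm : ∀ θ, ‖U θ‖ = 1 := by
    intro θ
    have hip : ⟪U θ, U θ⟫ = 1 := by
      rw [hinner]
      rw [inner_add_right, inner_add_right, real_inner_smul_right, real_inner_smul_right,
        real_inner_smul_right, real_inner_smul_right]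
      rw [real_inner_self_eq_norm_sq, hu₀]
      have h1 : ⟪u₀, w₀⟫ = 0 := inner_self_perp u₀
      have h2 : ⟪w₀, u₀⟫ = 0 := inner_perp_self u₀
      have h3 : ⟪w₀, w₀⟫ = 1 := by
        rw [real_inner_self_eq_norm_sq, hw₀, norm_perp, hu₀]; norm_num
      rw [h1, h2, h3]
      nlinarith [Real.sin_sq_add_cos_sq θ]
    rw [← Real.sqrt_sq (norm_nonneg (U θ)), ← real_inner_self_eq_norm_sq, hip, Real.sqrt_one]
  have hUadd : ∀ θ ε z, ⟪U (θ + ε), z⟫ =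
      Real.cos ε * ⟪U θ, z⟫ + Real.sin ε * ⟪perp (U θ), z⟫ := by
    intro θ ε z
    rw [hinner, Real.cos_add, Real.sin_add, hperpU]
    rw [inner_sub_left, real_inner_smul_left, real_inner_smul_left, hinner]
    ring
  -- the set of angles where U θ is still a normal at p
  set Z : Set ℝ := {θ | θ ∈ Set.Icc 0 Real.pi ∧ IsExtNormal A (U θ) p} with hZ
  have hZ0 : (0:ℝ) ∈ Z := by
    constructor
    · exact Set.left_mem_Icc.2 Real.pi_pos.le
    · intro y hy
      rw [hinner, hinner]
      simp only [Real.cos_zero, Real.sin_zero, one_mul, zero_mul, add_zero]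
      exact hn y hy
  have hZclosed : IsClosed Z := by
    have : Z = Set.Icc 0 Real.pi ∩ ⋂ y ∈ A, {θ | ⟪U θ, y⟫ ≤ ⟪U θ, p⟫} := by
      ext θ
      simp only [hZ, Set.mem_setOf_eq, Set.mem_inter_iff, Set.mem_iInter, IsExtNormal]
    rw [this]
    apply isClosed_Icc.inter
    apply isClosed_biInter
    intro y hy
    have hc : Continuous fun θ => ⟪U θ, y⟫ - ⟪U θ, p⟫ := by
      have : ∀ z : Pt, Continuous fun θ => ⟪U θ, z⟫ := by
        intro z
        simp only [hinner]
        exact (Real.continuous_cos.mul continuous_const).add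
          (Real.continuous_sin.mul continuous_const)
      exact (this y).sub (this p)
    have : {θ : ℝ | ⟪U θ, y⟫ ≤ ⟪U θ, p⟫} = (fun θ => ⟪U θ, y⟫ - ⟪U θ, p⟫) ⁻¹' Set.Iic 0 := by
      ext θ; simp [sub_nonpos]
    rw [this]
    exact IsClosed.preimage hc isClosed_Iic
  have hZbdd : BddAbove Z := ⟨Real.pi, fun θ hθ => hθ.1.2⟩
  set θs := sSup Z with hθs
  have hθsZ : θs ∈ Z := hZclosed.csSup_mem ⟨0, hZ0⟩ hZbdd
  have hθslt : θs < Real.pi := by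
    rcases lt_or_eq_of_le hθsZ.1.2 with h | h
    · exact h
    · exfalso
      -- U π = -u₀ : both u₀ and -u₀ normals ⇒ A collinear
      have hUpi : ∀ z, ⟪U Real.pi, z⟫ = -⟪u₀, z⟫ := by
        intro z
        rw [hinner]
        simp
      have hminmax : ∀ y ∈ A, ⟪u₀, y⟫ = ⟪u₀, p⟫ := by
        intro y hy
        have h1 := hn y hy
        have h2 := hθsZ.2 y hy
        rw [h, hUpi, hUpi] at h2
        linarith
      apply hA
      have : (A : Set Pt) ⊆ {z : Pt | ⟪u₀, z - p⟫ = 0} := by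
        intro z hz
        simp only [Set.mem_setOf_eq, inner_sub_right]
        rw [hminmax z (by exact_mod_cast hz)]
        ring
      apply Collinear.subset this
      -- the hyperplane {z | ⟪u₀, z - p⟫ = 0} is a line
      have : {z : Pt | ⟪u₀, z - p⟫ = 0} = {z : Pt | ∃ t : ℝ, z = t • perp u₀ + p} := by
        ext z
        simp only [Set.mem_setOf_eq]
        constructor
        · intro hz
          obtain ⟨t, ht⟩ := eq_smul_perp_of_inner_eq_zero hu₀ne hz
          exact ⟨t, by rw [← ht]; abel⟩
        · rintro ⟨t, rfl⟩
          rw [add_sub_cancel_right, real_inner_smul_right, inner_self_perp, mul_zero]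
      rw [this]
      apply Collinear.subset (s₂ := {z : Pt | ∃ t : ℝ, z = t • perp u₀ + p})
        (Set.Subset.refl _)
      have := collinear_iff_exists_forall_eq_smul_vadd (k := ℝ)
        {z : Pt | ∃ t : ℝ, z = t • perp u₀ + p}
      rw [this]
      exact ⟨p, perp u₀, by rintro z ⟨t, rfl⟩; exact ⟨t, rfl⟩⟩
  -- main claim: at θs, some point of the maxSet beats p in the perp direction
  by_contra hcon
  push_neg at hcon
  have hkey := hcon (U θs) (hUnorm θs) hθsZ.2
  -- every maximizer q has ⟪perp (U θs), q⟫ ≤ ⟪perp (U θs), p⟫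
  -- so rotating slightly further keeps p a maximizer
  have hev : ∀ y ∈ A, ∀ᶠ ε in nhdsWithin (0:ℝ) (Set.Ioi 0),
      ⟪U (θs + ε), y⟫ ≤ ⟪U (θs + ε), p⟫ := by
    intro y hy
    by_cases hmax : y ∈ maxSet A (U θs)
    · -- equal in U θs direction, and perp value ≤ that of p
      have h1 : ⟪U θs, y⟫ = ⟪U θs, p⟫ :=
        le_antisymm (hθsZ.2 y hy) ((mem_maxSet.1 hmax).2 p hp)
      have h2 : ⟪perp (U θs), y⟫ ≤ ⟪perp (U θs), p⟫ := hkey y hmax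
      filter_upwards [Ioo_mem_nhdsGT_of_mem
        (Set.left_mem_Ico.2 (by linarith [Real.pi_pos] : (0:ℝ) < Real.pi / 2))] with ε hε
      rw [hUadd, hUadd, h1]
      have hsin : 0 ≤ Real.sin ε := Real.sin_nonneg_of_nonneg_of_le_pi (le_of_lt hε.1)
        (by linarith [hε.2, Real.pi_pos])
      nlinarith [mul_le_mul_of_nonneg_left h2 hsin]
    · -- strict inequality survives small rotation
      have h1 : ⟪U θs, y⟫ < ⟪U θs, p⟫ := by
        rcases lt_or_eq_of_le (hθsZ.2 y hy) with h | h
        · exact h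
        · exact absurd (mem_maxSet.2 ⟨hy, isExtNormal_congr hθsZ.2 hy (le_of_eq h.symm)⟩) hmax
      have hc : Filter.Tendsto (fun ε => ⟪U (θs + ε), y⟫ - ⟪U (θs + ε), p⟫)
          (nhdsWithin (0:ℝ) (Set.Ioi 0)) (nhds (⟪U θs, y⟫ - ⟪U θs, p⟫)) := by
        have hcont : Continuous fun ε => ⟪U (θs + ε), y⟫ - ⟪U (θs + ε), p⟫ := by
          simp only [hUadd]
          apply Continuous.sub
          · exact (Real.continuous_cos.mul continuous_const).add
              (Real.continuous_sin.mul continuous_const)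
          · exact (Real.continuous_cos.mul continuous_const).add
              (Real.continuous_sin.mul continuous_const)
        have h0 : (fun ε => ⟪U (θs + ε), y⟫ - ⟪U (θs + ε), p⟫) 0 = ⟪U θs, y⟫ - ⟪U θs, p⟫ := by
          norm_num
        have := (hcont.tendsto 0).mono_left (nhdsWithin_le_nhds (s := Set.Ioi (0:ℝ)))
        simpa using this
      have hlt : ⟪U θs, y⟫ - ⟪U θs, p⟫ < 0 := by linarith
      filter_upwards [hc.eventually_lt_const hlt] with ε hε
      linarith
  have hev2 : ∀ᶠ ε in nhdsWithin (0:ℝ) (Set.Ioi 0),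
      (∀ y ∈ A, ⟪U (θs + ε), y⟫ ≤ ⟪U (θs + ε), p⟫) ∧ 0 < ε ∧ θs + ε ≤ Real.pi := by
    have hall : ∀ᶠ ε in nhdsWithin (0:ℝ) (Set.Ioi 0),
        ∀ y ∈ A, ⟪U (θs + ε), y⟫ ≤ ⟪U (θs + ε), p⟫ :=
      (Filter.eventually_all_finset A).2 hev
    have hsmall : ∀ᶠ ε in nhdsWithin (0:ℝ) (Set.Ioi 0), 0 < ε ∧ θs + ε ≤ Real.pi := by
      filter_upwards [Ioo_mem_nhdsGT_of_mem
        (Set.left_mem_Ico.2 (by linarith : (0:ℝ) < Real.pi - θs))] with ε hε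
      exact ⟨hε.1, by linarith [hε.2]⟩
    filter_upwards [hall, hsmall] with ε h1 h2
    exact ⟨h1, h2⟩
  obtain ⟨ε, hε1, hε2, hε3⟩ := hev2.exists
  have hmem : θs + ε ∈ Z := by
    refine ⟨⟨by linarith [hθsZ.1.1], hε3⟩, fun y hy => hε1 y hy⟩
  have : θs + ε ≤ θs := le_csSup hZbdd hmem
  linarith
/-- Unit vectors orthogonal to `v ≠ 0` in the plane. -/
lemma unit_orthogonal {u v : Pt} (hv : v ≠ 0) (hu : ‖u‖ = 1) (h : ⟪u, v⟫ = 0) :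
    u = ‖perp v‖⁻¹ • perp v ∨ u = ‖perp (-v)‖⁻¹ • perp (-v) := by
  have hune : u ≠ 0 := by intro h0; rw [h0, norm_zero] at hu; norm_num at hu
  obtain ⟨t, ht⟩ := eq_smul_perp_of_inner_eq_zero hune h
  -- v = t • perp u  ⇒  perp v = -t • u
  have hpv : perp v = -t • u := by
    rw [ht, perp_smul, perp_perp, smul_neg, neg_smul]
  have htne : t ≠ 0 := by
    intro h0; rw [h0, zero_smul] at ht; exact hv ht
  have hnv : ‖v‖ = |t| := by
    rw [ht, norm_smul, norm_perp, hu, mul_one, Real.norm_eq_abs]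
  have hnpv : ‖perp v‖ = |t| := by rw [norm_perp, hnv]
  have hpnv : perp (-v) = -perp v := by
    have := perp_smul (-1) v
    simpa using this
  rcases lt_or_gt_of_ne htne with hneg | hpos
  · left
    rw [hpv, norm_smul, Real.norm_eq_abs, abs_neg, hu, mul_one, smul_smul]
    rw [show |t|⁻¹ * -t = 1 by rw [abs_of_neg hneg]; field_simp, one_smul]
  · right
    rw [hpnv, hpv, neg_smul, neg_neg]
    rw [norm_smul, Real.norm_eq_abs, hu, mul_one, smul_smul]
    rw [show |t|⁻¹ * t = 1 by rw [abs_of_pos hpos]; field_simp, one_smul]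
/-- If all of `C` lies on a hyperplane orthogonal to `u ≠ 0`, then `C` is collinear. -/
lemma collinear_of_inner_const {C : Finset Pt} {u p : Pt} (hu : u ≠ 0)
    (h : ∀ y ∈ C, ⟪u, y⟫ = ⟪u, p⟫) : Collinear ℝ (C : Set Pt) := by
  have hsub : (C : Set Pt) ⊆ {z : Pt | ∃ t : ℝ, z = t • perp u + p} := by
    intro z hz
    have hz' : ⟪u, z - p⟫ = 0 := by
      rw [inner_sub_right, h z (by exact_mod_cast hz)]; ring
    obtain ⟨t, ht⟩ := eq_smul_perp_of_inner_eq_zero hu hz'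
    exact ⟨t, by rw [← ht]; abel⟩
  apply Collinear.subset hsub
  rw [collinear_iff_exists_forall_eq_smul_vadd]
  exact ⟨p, perp u, by rintro z ⟨t, rfl⟩; exact ⟨t, rfl⟩⟩

/-- `⟪perp u, ·⟫` is injective on any `maxSet` for `u ≠ 0`. -/
lemma maxSet_perp_injOn {A : Finset Pt} {u : Pt} (hu : u ≠ 0) {z z' : Pt}
    (hz : z ∈ maxSet A u) (hz' : z' ∈ maxSet A u)
    (h : ⟪perp u, z⟫ = ⟪perp u, z'⟫) : z = z' := by
  have h0 : ⟪u, z - z'⟫ = 0 := by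
    rw [inner_sub_right]
    have h1 := (mem_maxSet.1 hz).2 z' (maxSet_subset A u hz')
    have h2 := (mem_maxSet.1 hz').2 z (maxSet_subset A u hz)
    linarith
  obtain ⟨t, ht⟩ := eq_smul_perp_of_inner_eq_zero hu h0
  have : ⟪perp u, z - z'⟫ = t * ‖perp u‖ ^ 2 := by
    rw [ht, real_inner_smul_right, real_inner_self_eq_norm_sq]
  rw [inner_sub_right, h, sub_self] at this
  have hpu : perp u ≠ 0 := by
    intro h0'
    apply hu
    have := norm_perp u
    rw [h0', norm_zero] at this
    exact norm_eq_zero.1 this.symm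
  have ht0 : t = 0 := by
    have : t * ‖perp u‖ ^ 2 = 0 := this.symm
    rcases mul_eq_zero.1 this with h' | h'
    · exact h'
    · exact absurd (pow_eq_zero_iff (by norm_num)|>.1 h') (norm_ne_zero_iff.2 hpu)
  have : z - z' = 0 := by rw [ht, ht0, zero_smul]
  exact sub_eq_zero.1 this

/-- The endpoint of `maxSet A u` in the `perp u` direction. -/
def ePt (A : Finset Pt) (u : Pt) : Pt :=
  if h : ∃ x ∈ maxSet A u, ∀ y ∈ maxSet A u, ⟪perp u, y⟫ ≤ ⟪perp u, x⟫ then h.choose else 0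

lemma ePt_spec {A : Finset Pt} {u : Pt} (hA : (maxSet A u).Nonempty) :
    ePt A u ∈ maxSet A u ∧ ∀ y ∈ maxSet A u, ⟪perp u, y⟫ ≤ ⟪perp u, ePt A u⟫ := by
  have h : ∃ x ∈ maxSet A u, ∀ y ∈ maxSet A u, ⟪perp u, y⟫ ≤ ⟪perp u, x⟫ :=
    (maxSet A u).exists_max_image (fun y => ⟪perp u, y⟫) hA
  rw [ePt, dif_pos h]
  obtain ⟨hx, hmax⟩ := h.choose_spec
  exact ⟨hx, hmax⟩

/-- The set of unit outer normals of "edges" (faces with at least 2 points). -/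
def edgeNormals (A : Finset Pt) : Finset Pt :=
  ((A ×ˢ A).image fun pq => ‖perp (pq.2 - pq.1)‖⁻¹ • perp (pq.2 - pq.1)).filter
    fun u => ‖u‖ = 1 ∧ 2 ≤ (maxSet A u).card

lemma mem_edgeNormals {A : Finset Pt} {u : Pt} :
    u ∈ edgeNormals A ↔ ‖u‖ = 1 ∧ 2 ≤ (maxSet A u).card := by
  constructor
  · intro h
    exact (Finset.mem_filter.1 h).2
  · intro ⟨h1, h2⟩
    rw [edgeNormals, Finset.mem_filter]
    refine ⟨?_, h1, h2⟩
    obtain ⟨p, hp, q, hq, hpq⟩ := Finset.one_lt_card.1 h2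
    have horth : ⟪u, q - p⟫ = 0 := by
      rw [inner_sub_right]
      have ha := (mem_maxSet.1 hp).2 q (maxSet_subset A u hq)
      have hb := (mem_maxSet.1 hq).2 p (maxSet_subset A u hp)
      linarith
    have hqp : q - p ≠ 0 := sub_ne_zero.2 (Ne.symm hpq)
    rcases unit_orthogonal hqp h1 horth with h | h
    · apply Finset.mem_image.2
      refine ⟨(p, q), ?_, h.symm⟩
      exact Finset.mem_product.2 ⟨maxSet_subset A u hp, maxSet_subset A u hq⟩
    · apply Finset.mem_image.2
      refine ⟨(q, p), ?_, ?_⟩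
      · exact Finset.mem_product.2 ⟨maxSet_subset A u hq, maxSet_subset A u hp⟩
      · rw [h]
        have : ((q, p).2 - (q, p).1 : Pt) = -(q - p) := by show p - q = -(q-p); abel
        rw [this]
/-- Key disjointness: for distinct unit normals, the max sets minus their
`perp`-endpoints are disjoint (for non-collinear `C`). -/
lemma erase_ePt_disjoint {C : Finset Pt} (hC : ¬ Collinear ℝ (C : Set Pt)) {u u' : Pt}
    (hu : ‖u‖ = 1) (hu' : ‖u'‖ = 1) (hne : u ≠ u') :
    Disjoint ((maxSet C u).erase (ePt C u)) ((maxSet C u').erase (ePt C u')) := by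
  have hu0 : u ≠ 0 := by intro h; rw [h, norm_zero] at hu; norm_num at hu
  have hu'0 : u' ≠ 0 := by intro h; rw [h, norm_zero] at hu'; norm_num at hu'
  rw [Finset.disjoint_left]
  intro p hp hp'
  have hpu := Finset.mem_of_mem_erase hp
  have hpu' := Finset.mem_of_mem_erase hp'
  have hpne := Finset.ne_of_mem_erase hp
  have hpne' := Finset.ne_of_mem_erase hp'
  -- helper: if all of maxSet C u is on the non-positive perp side of p, then p = ePt C u
  have hend : ∀ (w : Pt), ‖w‖ = 1 → ∀ p' ∈ maxSet C w,
      (∀ y ∈ maxSet C w, ⟪perp w, y⟫ ≤ ⟪perp w, p'⟫) → p' = ePt C w := by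
    intro w hw p' hp'w hmax
    have hw0 : w ≠ 0 := by intro h; rw [h, norm_zero] at hw; norm_num at hw
    obtain ⟨he1, he2⟩ := ePt_spec ⟨p', hp'w⟩
    exact maxSet_perp_injOn hw0 hp'w he1
      (le_antisymm (he2 p' hp'w) (hmax (ePt C w) he1))
  set s := ⟪u', perp u⟫ with hs
  -- case analysis on the sign of s
  rcases lt_trichotomy s 0 with hslt | hseq | hsgt
  · -- s < 0: p is the perp-endpoint of maxSet C u'
    apply hpne'
    apply hend u' hu' p hpu'
    intro y hy
    have h0 : ⟪u', y - p⟫ = 0 := by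
      rw [inner_sub_right]
      have h1 := (mem_maxSet.1 hy).2 p (maxSet_subset C u' hpu')
      have h2 := (mem_maxSet.1 hpu').2 y (maxSet_subset C u' hy)
      linarith
    obtain ⟨t, ht⟩ := eq_smul_perp_of_inner_eq_zero hu'0 h0
    -- p maximizes u over C, y ∈ C
    have h3 : ⟪u, y - p⟫ ≤ 0 := by
      rw [inner_sub_right]
      have := (mem_maxSet.1 hpu).2 y (maxSet_subset C u' hy)
      linarith
    have h4 : ⟪u, y - p⟫ = t * ⟪u, perp u'⟫ := by
      rw [ht, real_inner_smul_right]
    have h5 : ⟪u, perp u'⟫ = -s := by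
      rw [hs, inner_coords, inner_coords, perp_apply0, perp_apply1, perp_apply0, perp_apply1]
      ring
    have ht0 : t ≤ 0 := by
      rw [h4, h5] at h3
      nlinarith
    have : ⟪perp u', y - p⟫ = t * ‖perp u'‖ ^ 2 := by
      rw [ht, real_inner_smul_right, real_inner_self_eq_norm_sq]
    rw [inner_sub_right] at this
    nlinarith [sq_nonneg ‖perp u'‖]
  · -- s = 0: u' parallel to u, so u' = -u, contradiction with noncollinearity
    exfalso
    have h0 : ⟪u', perp u⟫ = 0 := hseq
    obtain ⟨t, ht⟩ := eq_smul_perp_of_inner_eq_zero hu'0 h0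
    -- perp u = t • perp u' ⇒ u = t • u'
    have huu' : u = t • u' := by
      have := congrArg perp ht
      rw [perp_perp, perp_smul, perp_perp, smul_neg] at this
      have := congrArg Neg.neg this
      rw [neg_neg, neg_neg] at this
      exact this
    have habs : |t| = 1 := by
      have : ‖u‖ = |t| * ‖u'‖ := by rw [huu', norm_smul, Real.norm_eq_abs]
      rw [hu, hu'] at this
      linarith
    rcases abs_eq (by norm_num : (0:ℝ) ≤ 1) |>.1 habs with h1 | h1
    · rw [h1, one_smul] at huu'; exact hne huu'
    · rw [h1, neg_smul, one_smul] at huu'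
      -- u = -u' : p maximizes both u and -u over C
      apply hC
      apply collinear_of_inner_const hu0 (p := p)
      intro y hy
      have hy1 := (mem_maxSet.1 hpu).2 y hy
      have hy2 := (mem_maxSet.1 hpu').2 y hy
      rw [show u' = -u by rw [huu', neg_neg], inner_neg_left, inner_neg_left] at hy2
      linarith
  · -- s > 0: p is the perp-endpoint of maxSet C u
    apply hpne
    apply hend u hu p hpu
    intro y hy
    have h0 : ⟪u, y - p⟫ = 0 := by
      rw [inner_sub_right]
      have h1 := (mem_maxSet.1 hy).2 p (maxSet_subset C u hpu)
      have h2 := (mem_maxSet.1 hpu).2 y (maxSet_subset C u hy)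
      linarith
    obtain ⟨t, ht⟩ := eq_smul_perp_of_inner_eq_zero hu0 h0
    have h3 : ⟪u', y - p⟫ ≤ 0 := by
      rw [inner_sub_right]
      have := (mem_maxSet.1 hpu').2 y (maxSet_subset C u hy)
      linarith
    have h4 : ⟪u', y - p⟫ = t * s := by
      rw [ht, real_inner_smul_right, hs]
    have ht0 : t ≤ 0 := by nlinarith
    have : ⟪perp u, y - p⟫ = t * ‖perp u‖ ^ 2 := by
      rw [ht, real_inner_smul_right, real_inner_self_eq_norm_sq]
    rw [inner_sub_right] at this
    nlinarith [sq_nonneg ‖perp u‖]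
lemma maxSet_add (A B : Finset Pt) (u : Pt) :
    maxSet (A + B) u = maxSet A u + maxSet B u := by
  ext z
  constructor
  · intro hz
    obtain ⟨hzC, hzmax⟩ := mem_maxSet.1 hz
    obtain ⟨a, ha, b, hb, rfl⟩ := Finset.mem_add.1 hzC
    refine Finset.mem_add.2 ⟨a, ?_, b, ?_, rfl⟩
    · refine mem_maxSet.2 ⟨ha, fun a' ha' => ?_⟩
      have := hzmax (a' + b) (Finset.add_mem_add ha' hb)
      rw [inner_add_right, inner_add_right] at this
      linarith
    · refine mem_maxSet.2 ⟨hb, fun b' hb' => ?_⟩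
      have := hzmax (a + b') (Finset.add_mem_add ha hb')
      rw [inner_add_right, inner_add_right] at this
      linarith
  · intro hz
    obtain ⟨a, ha, b, hb, rfl⟩ := Finset.mem_add.1 hz
    refine mem_maxSet.2 ⟨Finset.add_mem_add (maxSet_subset A u ha) (maxSet_subset B u hb),
      fun y hy => ?_⟩
    obtain ⟨a', ha', b', hb', rfl⟩ := Finset.mem_add.1 hy
    have h1 := (mem_maxSet.1 ha).2 a' ha'
    have h2 := (mem_maxSet.1 hb).2 b' hb'
    rw [inner_add_right, inner_add_right]
    linarith

/-- One-dimensional sumset bound over `ℝ`. -/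
lemma real_card_add (P Q : Finset ℝ) (hP : P.Nonempty) (hQ : Q.Nonempty) :
    P.card + Q.card ≤ (P + Q).card + 1 := by
  classical
  set M := Q.max' hQ
  set m := P.min' hP
  have hsub : (P.image (· + M)) ∪ (Q.image (m + ·)) ⊆ P + Q := by
    intro z hz
    rcases Finset.mem_union.1 hz with h | h
    · obtain ⟨p, hp, rfl⟩ := Finset.mem_image.1 h
      exact Finset.add_mem_add hp (Q.max'_mem hQ)
    · obtain ⟨q, hq, rfl⟩ := Finset.mem_image.1 h
      exact Finset.add_mem_add (P.min'_mem hP) hq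
  have hinter : (P.image (· + M)) ∩ (Q.image (m + ·)) ⊆ {m + M} := by
    intro z hz
    obtain ⟨h1, h2⟩ := Finset.mem_inter.1 hz
    obtain ⟨p, hp, hpz⟩ := Finset.mem_image.1 h1
    obtain ⟨q, hq, hqz⟩ := Finset.mem_image.1 h2
    have hpm : m ≤ p := P.min'_le p hp
    have hqM : q ≤ M := Q.le_max' q hq
    have : p + M = m + q := by rw [hpz, hqz]
    have hpm' : p = m := by linarith
    simp only [Finset.mem_singleton, ← hpz, hpm']
  have hc1 : (P.image (· + M)).card = P.card :=
    Finset.card_image_of_injective _ (add_left_injective M)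
  have hc2 : (Q.image (m + ·)).card = Q.card :=
    Finset.card_image_of_injective _ (add_right_injective m)
  have := Finset.card_union_add_card_inter (P.image (· + M)) (Q.image (m + ·))
  have hle1 := Finset.card_le_card hsub
  have hle2 := Finset.card_le_card hinter
  simp only [Finset.card_singleton] at hle2
  rw [hc1, hc2] at this
  omega

/-- Sumset bound for max sets. -/
lemma maxSet_card_add {A B : Finset Pt} (hA : A.Nonempty) (hB : B.Nonempty) {u : Pt}
    (hu : u ≠ 0) :
    (maxSet A u).card + (maxSet B u).card ≤ (maxSet (A + B) u).card + 1 := by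
  classical
  set f : Pt → ℝ := fun z => ⟪perp u, z⟫ with hf
  -- images
  have himg : ∀ (X : Finset Pt) (Y : Finset Pt), (maxSet X u).card = ((maxSet X u).image f).card :=
    fun X Y => (Finset.card_image_of_injOn fun z hz z' hz' h =>
      maxSet_perp_injOn hu hz hz' h).symm
  have h1 : (maxSet A u).card = ((maxSet A u).image f).card := himg A B
  have h2 : (maxSet B u).card = ((maxSet B u).image f).card := himg B A
  have h3 : (maxSet (A+B) u).card = ((maxSet (A+B) u).image f).card := himg (A+B) B
  have himadd : (maxSet (A+B) u).image f = (maxSet A u).image f + (maxSet B u).image f := by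
    rw [maxSet_add]
    ext t
    simp only [Finset.mem_image, Finset.mem_add]
    constructor
    · rintro ⟨z, ⟨a, ha, b, hb, rfl⟩, rfl⟩
      exact ⟨f a, ⟨a, ha, rfl⟩, f b, ⟨b, hb, rfl⟩, by rw [hf]; simp [inner_add_right]⟩
    · rintro ⟨x, ⟨a, ha, rfl⟩, y, ⟨b, hb, rfl⟩, rfl⟩
      exact ⟨a + b, ⟨a, ha, b, hb, rfl⟩, by rw [hf]; simp [inner_add_right]⟩
  have hne1 : ((maxSet A u).image f).Nonempty := (maxSet_nonempty hA u).image f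
  have hne2 : ((maxSet B u).image f).Nonempty := (maxSet_nonempty hB u).image f
  have := real_card_add _ _ hne1 hne2
  rw [h1, h2, h3, himadd]
  omega
lemma bdryCard_le_sum {A : Finset Pt} (hA : ¬ Collinear ℝ (A : Set Pt)) :
    bdryCard A ≤ ∑ u ∈ edgeNormals A, ((maxSet A u).card - 1) := by
  classical
  have hsub : A.filter (fun x => x ∈ frontier (convexHull ℝ (A : Set Pt))) ⊆
      (edgeNormals A).biUnion (fun u => (maxSet A u).erase (ePt A u)) := by
    intro p hp
    obtain ⟨hpA, hpf⟩ := Finset.mem_filter.1 hp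
    obtain ⟨u₀, hu₀, hn₀⟩ := exists_unit_normal_of_frontier hA hpA hpf
    obtain ⟨u, hu, hn, q, hq, hlt⟩ := rotate_normal hA hpA hu₀ hn₀
    have hpmax : p ∈ maxSet A u := mem_maxSet.2 ⟨hpA, hn⟩
    have hpq : p ≠ q := by
      intro h; rw [h] at hlt; exact lt_irrefl _ hlt
    have hcard : 2 ≤ (maxSet A u).card := Finset.one_lt_card.2 ⟨p, hpmax, q, hq, hpq⟩
    refine Finset.mem_biUnion.2 ⟨u, mem_edgeNormals.2 ⟨hu, hcard⟩, ?_⟩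
    refine Finset.mem_erase.2 ⟨?_, hpmax⟩
    intro h
    have := (ePt_spec ⟨p, hpmax⟩).2 q hq
    rw [← h] at this
    linarith
  have hdisj : ∀ u ∈ edgeNormals A, ∀ u' ∈ edgeNormals A, u ≠ u' →
      Disjoint ((maxSet A u).erase (ePt A u)) ((maxSet A u').erase (ePt A u')) := by
    intro u hu u' hu' hne
    exact erase_ePt_disjoint hA (mem_edgeNormals.1 hu).1 (mem_edgeNormals.1 hu').1 hne
  calc bdryCard A ≤ ((edgeNormals A).biUnion (fun u => (maxSet A u).erase (ePt A u))).card :=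
        Finset.card_le_card hsub
    _ = ∑ u ∈ edgeNormals A, ((maxSet A u).erase (ePt A u)).card :=
        Finset.card_biUnion hdisj
    _ = ∑ u ∈ edgeNormals A, ((maxSet A u).card - 1) := by
        apply Finset.sum_congr rfl
        intro u hu
        have h2 := (mem_edgeNormals.1 hu).2
        have hne : (maxSet A u).Nonempty := Finset.card_pos.1 (by omega)
        rw [Finset.card_erase_of_mem (ePt_spec hne).1]

lemma sum_le_bdryCard {C : Finset Pt} (hC : ¬ Collinear ℝ (C : Set Pt)) {S : Finset Pt}
    (hS : S ⊆ edgeNormals C) :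
    ∑ u ∈ S, ((maxSet C u).card - 1) ≤ bdryCard C := by
  classical
  have hdisj : ∀ u ∈ S, ∀ u' ∈ S, u ≠ u' →
      Disjoint ((maxSet C u).erase (ePt C u)) ((maxSet C u').erase (ePt C u')) := by
    intro u hu u' hu' hne
    exact erase_ePt_disjoint hC (mem_edgeNormals.1 (hS hu)).1 (mem_edgeNormals.1 (hS hu')).1 hne
  have hsub : S.biUnion (fun u => (maxSet C u).erase (ePt C u)) ⊆
      C.filter (fun x => x ∈ frontier (convexHull ℝ (C : Set Pt))) := by
    intro z hz
    obtain ⟨u, hu, hzu⟩ := Finset.mem_biUnion.1 hz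
    have hz' := Finset.mem_of_mem_erase hzu
    obtain ⟨hzC, hzn⟩ := mem_maxSet.1 hz'
    have hu1 := (mem_edgeNormals.1 (hS hu)).1
    have hu0 : u ≠ 0 := by intro h; rw [h, norm_zero] at hu1; norm_num at hu1
    exact Finset.mem_filter.2 ⟨hzC, mem_frontier_of_isExtNormal hzC hu0 hzn⟩
  calc ∑ u ∈ S, ((maxSet C u).card - 1)
      = ∑ u ∈ S, ((maxSet C u).erase (ePt C u)).card := by
        apply Finset.sum_congr rfl
        intro u hu
        have h2 := (mem_edgeNormals.1 (hS hu)).2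
        have hne : (maxSet C u).Nonempty := Finset.card_pos.1 (by omega)
        rw [Finset.card_erase_of_mem (ePt_spec hne).1]
    _ = (S.biUnion (fun u => (maxSet C u).erase (ePt C u))).card :=
        (Finset.card_biUnion hdisj).symm
    _ ≤ bdryCard C := Finset.card_le_card hsub

lemma not_collinear_add {A B : Finset Pt} (hA : ¬ Collinear ℝ (A : Set Pt))
    (hB : B.Nonempty) : ¬ Collinear ℝ ((A + B : Finset Pt) : Set Pt) := by
  intro hcol
  apply hA
  obtain ⟨b, hb⟩ := hB
  rw [collinear_iff_exists_forall_eq_smul_vadd] at hcol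
  obtain ⟨p₀, v, hpv⟩ := hcol
  rw [collinear_iff_exists_forall_eq_smul_vadd]
  refine ⟨p₀ - b, v, ?_⟩
  intro p hp
  obtain ⟨r, hr⟩ := hpv (p + b) (by
    exact_mod_cast Finset.add_mem_add (by exact_mod_cast hp) hb)
  refine ⟨r, ?_⟩
  have : p + b = r • v + p₀ := hr
  have h2 : p = r • v + (p₀ - b) := by
    have h3 : p + b = r • v + p₀ := this
    linear_combination (norm := module) h3
  exact h2

/-- Superadditivity of the number of boundary points. -/
lemma bdryCard_superadd {A B : Finset Pt} (hA : ¬ Collinear ℝ (A : Set Pt))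
    (hB : ¬ Collinear ℝ (B : Set Pt)) :
    bdryCard A + bdryCard B ≤ bdryCard (A + B) := by
  classical
  have hAne : A.Nonempty := not_collinear_nonempty hA
  have hBne : B.Nonempty := not_collinear_nonempty hB
  have hC : ¬ Collinear ℝ ((A + B : Finset Pt) : Set Pt) := not_collinear_add hA hBne
  set S : Finset Pt := edgeNormals A ∪ edgeNormals B with hSdef
  have hSsub : S ⊆ edgeNormals (A + B) := by
    intro u hu
    have hcases := Finset.mem_union.1 hu
    have hu1 : ‖u‖ = 1 := by
      rcases hcases with h | h
      · exact (mem_edgeNormals.1 h).1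
      · exact (mem_edgeNormals.1 h).1
    have hu0 : u ≠ 0 := by intro h; rw [h, norm_zero] at hu1; norm_num at hu1
    have hsum := maxSet_card_add hAne hBne hu0
    have hA1 : 1 ≤ (maxSet A u).card := Finset.card_pos.2 (maxSet_nonempty hAne u)
    have hB1 : 1 ≤ (maxSet B u).card := Finset.card_pos.2 (maxSet_nonempty hBne u)
    have h2 : 2 ≤ (maxSet (A + B) u).card := by
      rcases hcases with h | h
      · have := (mem_edgeNormals.1 h).2; omega
      · have := (mem_edgeNormals.1 h).2; omega
    exact mem_edgeNormals.2 ⟨hu1, h2⟩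
  have hpoint : ∀ u ∈ S, ((maxSet A u).card - 1) + ((maxSet B u).card - 1) ≤
      (maxSet (A + B) u).card - 1 := by
    intro u hu
    have hu1 : ‖u‖ = 1 := (mem_edgeNormals.1 (hSsub hu)).1
    have hu0 : u ≠ 0 := by intro h; rw [h, norm_zero] at hu1; norm_num at hu1
    have hsum := maxSet_card_add hAne hBne hu0
    have hA1 : 1 ≤ (maxSet A u).card := Finset.card_pos.2 (maxSet_nonempty hAne u)
    have hB1 : 1 ≤ (maxSet B u).card := Finset.card_pos.2 (maxSet_nonempty hBne u)
    omega
  calc bdryCard A + bdryCard B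
      ≤ (∑ u ∈ edgeNormals A, ((maxSet A u).card - 1)) +
          (∑ u ∈ edgeNormals B, ((maxSet B u).card - 1)) :=
        Nat.add_le_add (bdryCard_le_sum hA) (bdryCard_le_sum hB)
    _ ≤ (∑ u ∈ S, ((maxSet A u).card - 1)) + (∑ u ∈ S, ((maxSet B u).card - 1)) := by
        apply Nat.add_le_add
        · exact Finset.sum_le_sum_of_subset (by simp [hSdef, Finset.subset_union_left])
        · exact Finset.sum_le_sum_of_subset (by simp [hSdef, Finset.subset_union_right])
    _ = ∑ u ∈ S, (((maxSet A u).card - 1) + ((maxSet B u).card - 1)) :=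
        (Finset.sum_add_distrib).symm
    _ ≤ ∑ u ∈ S, ((maxSet (A + B) u).card - 1) := Finset.sum_le_sum hpoint
    _ ≤ bdryCard (A + B) := sum_le_bdryCard hC hSsub
lemma bdry_add_int (A : Finset Pt) : bdryCard A + intCard A = A.card := by
  classical
  rw [bdryCard, intCard]
  have hcongr : A.filter (fun x => x ∈ interior (convexHull ℝ (A : Set Pt))) =
      A.filter (fun x => ¬ (x ∈ frontier (convexHull ℝ (A : Set Pt)))) := by
    apply Finset.filter_congr
    intro x hx
    have hxh : x ∈ convexHull ℝ (A : Set Pt) := subset_convexHull ℝ _ hx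
    have hcl : closure (convexHull ℝ (A : Set Pt)) = convexHull ℝ (A : Set Pt) :=
      (A.finite_toSet.isClosed_convexHull ℝ).closure_eq
    constructor
    · intro hint hfr
      rw [frontier, hcl] at hfr
      exact hfr.2 hint
    · intro hfr
      by_contra hint
      exact hfr (by rw [frontier, hcl]; exact ⟨hxh, hint⟩)
  rw [hcongr]
  exact Finset.card_filter_add_card_filter_not
    (p := fun x => x ∈ frontier (convexHull ℝ (A : Set Pt)))

lemma card_le_intCard {A B : Finset Pt}
    (hB : ∃ b0 ∈ B, b0 ∈ interior (convexHull ℝ (B : Set Pt))) :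
    A.card ≤ intCard (A + B) := by
  classical
  obtain ⟨b0, hb0B, hb0⟩ := hB
  rw [intCard]
  apply Finset.card_le_card_of_injOn (fun a => a + b0)
  · intro a ha
    refine Finset.mem_filter.2 ⟨Finset.add_mem_add ha hb0B, ?_⟩
    have hhull : (convexHull ℝ ((A + B : Finset Pt) : Set Pt)) =
        convexHull ℝ (A : Set Pt) + convexHull ℝ (B : Set Pt) := by
      rw [Finset.coe_add, convexHull_add]
    rw [hhull]
    have himg : (fun x => a + x) '' interior (convexHull ℝ (B : Set Pt)) =
        interior ((fun x => a + x) '' convexHull ℝ (B : Set Pt)) := by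
      exact (Homeomorph.addLeft a).image_interior _
    have hmem : a + b0 ∈ (fun x => a + x) '' interior (convexHull ℝ (B : Set Pt)) :=
      ⟨b0, hb0, rfl⟩
    rw [himg] at hmem
    refine interior_mono ?_ hmem
    intro z hz
    obtain ⟨x, hx, rfl⟩ := hz
    exact Set.add_mem_add (subset_convexHull ℝ _ ha) hx
  · intro a ha a' ha' h
    exact add_left_injective b0 h

theorem sqrt_tr_one_interior_point
    (A B : Finset Pt) (hA : ¬ Collinear ℝ (A : Set Pt)) (hB : ¬ Collinear ℝ (B : Set Pt))
    (hiA : intCard A = 1) (hiB : intCard B = 1) :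
    Real.sqrt (2 * (intCard (A + B) : ℝ) + (bdryCard (A + B) : ℝ) - 2) ≥
      Real.sqrt (2 * (intCard A : ℝ) + (bdryCard A : ℝ) - 2) +
        Real.sqrt (2 * (intCard B : ℝ) + (bdryCard B : ℝ) - 2) := by
  classical
  -- interior points of A and B
  have hA0 : ∃ a0 ∈ A, a0 ∈ interior (convexHull ℝ (A : Set Pt)) := by
    have : (A.filter fun x => x ∈ interior (convexHull ℝ (A : Set Pt))).Nonempty := by
      rw [← Finset.card_pos, ← intCard, hiA]; norm_num
    obtain ⟨a0, ha0⟩ := this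
    exact ⟨a0, (Finset.mem_filter.1 ha0).1, (Finset.mem_filter.1 ha0).2⟩
  have hB0 : ∃ b0 ∈ B, b0 ∈ interior (convexHull ℝ (B : Set Pt)) := by
    have : (B.filter fun x => x ∈ interior (convexHull ℝ (B : Set Pt))).Nonempty := by
      rw [← Finset.card_pos, ← intCard, hiB]; norm_num
    obtain ⟨b0, hb0⟩ := this
    exact ⟨b0, (Finset.mem_filter.1 hb0).1, (Finset.mem_filter.1 hb0).2⟩
  -- cardinality facts
  have hcardA : A.card = bdryCard A + 1 := by
    have := bdry_add_int A; rw [hiA] at this; omega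
  have hcardB : B.card = bdryCard B + 1 := by
    have := bdry_add_int B; rw [hiB] at this; omega
  have hI1 : bdryCard A + 1 ≤ intCard (A + B) := by
    rw [← hcardA]; exact card_le_intCard hB0
  have hI2 : bdryCard B + 1 ≤ intCard (A + B) := by
    rw [← hcardB, show A + B = B + A from add_comm A B]
    exact card_le_intCard hA0
  have hbdry : bdryCard A + bdryCard B ≤ bdryCard (A + B) := bdryCard_superadd hA hB
  -- pass to the reals
  set a : ℝ := (bdryCard A : ℝ) with hadef
  set b : ℝ := (bdryCard B : ℝ) with hbdef
  have ha0 : (0:ℝ) ≤ a := by positivity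
  have hb0 : (0:ℝ) ≤ b := by positivity
  have hIa : a + 1 ≤ (intCard (A + B) : ℝ) := by rw [hadef]; exact_mod_cast hI1
  have hIb : b + 1 ≤ (intCard (A + B) : ℝ) := by rw [hbdef]; exact_mod_cast hI2
  have hbd : a + b ≤ (bdryCard (A + B) : ℝ) := by rw [hadef, hbdef]; exact_mod_cast hbdry
  -- simplify the right-hand side
  have hRA : 2 * (intCard A : ℝ) + a - 2 = a := by rw [hiA]; push_cast; ring
  have hRB : 2 * (intCard B : ℝ) + b - 2 = b := by rw [hiB]; push_cast; ring
  rw [hRA, hRB]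
  -- key: √a √b ≤ max a b
  have hmax : Real.sqrt a * Real.sqrt b ≤ max a b := by
    have h1 : Real.sqrt a * Real.sqrt b = Real.sqrt (a * b) := (Real.sqrt_mul ha0 b).symm
    have h2 : a * b ≤ (max a b) ^ 2 := by
      rcases le_total a b with h | h
      · have : max a b = b := max_eq_right h
        rw [this]; nlinarith
      · have : max a b = a := max_eq_left h
        rw [this]; nlinarith
    calc Real.sqrt a * Real.sqrt b = Real.sqrt (a * b) := h1
      _ ≤ Real.sqrt ((max a b) ^ 2) := Real.sqrt_le_sqrt h2
      _ = max a b := by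
          rw [Real.sqrt_sq (le_max_of_le_left ha0)]
  have hImax : max a b + 1 ≤ (intCard (A + B) : ℝ) := by
    rcases max_cases a b with ⟨h, _⟩ | ⟨h, _⟩ <;> rw [h] <;> assumption
  have hargle : (Real.sqrt a + Real.sqrt b) ^ 2 ≤
      2 * (intCard (A + B) : ℝ) + (bdryCard (A + B) : ℝ) - 2 := by
    have hsq : (Real.sqrt a + Real.sqrt b) ^ 2 = a + b + 2 * (Real.sqrt a * Real.sqrt b) := by
      have h1 : Real.sqrt a ^ 2 = a := Real.sq_sqrt ha0
      have h2 : Real.sqrt b ^ 2 = b := Real.sq_sqrt hb0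
      nlinarith
    rw [hsq]
    have := hImax
    linarith [hmax]
  calc Real.sqrt a + Real.sqrt b
      = Real.sqrt ((Real.sqrt a + Real.sqrt b) ^ 2) := by
        rw [Real.sqrt_sq (by positivity)]
    _ ≤ Real.sqrt (2 * (intCard (A + B) : ℝ) + (bdryCard (A + B) : ℝ) - 2) :=
        Real.sqrt_le_sqrt hargle
end
end

section
/- Let A and B be finite non-collinear subsets of ℝ² with i_A ≥ 1. Then i_{A+B} ≥ i_A + |B| − 1. -/
open scoped Pointwise Classical RealInnerProductSpace

noncomputable section

private lemma exists_generic (S : Finset Pt) :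
    ∃ t : ℝ, ∀ p ∈ S, ∀ q ∈ S, p 0 + t * p 1 = q 0 + t * q 1 → p = q := by
  classical
  obtain ⟨t, ht⟩ := Infinite.exists_notMem_finset
    ((S ×ˢ S).image fun pq : Pt × Pt => (pq.1 0 - pq.2 0) / (pq.2 1 - pq.1 1))
  refine ⟨t, fun p hp q hq hpq => ?_⟩
  by_cases h1 : p 1 = q 1
  · have h0 : p 0 = q 0 := by rw [h1] at hpq; linarith
    ext i
    fin_cases i
    · exact h0
    · exact h1
  · exfalso
    apply ht
    refine Finset.mem_image.mpr ⟨(p, q), Finset.mem_product.mpr ⟨hp, hq⟩, ?_⟩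
    have hne : q 1 - p 1 ≠ 0 := fun h => h1 (by linarith)
    field_simp
    linear_combination hpq

private lemma mem_interior_sum {A B : Finset Pt} {x b : Pt}
    (hx : x ∈ interior (convexHull ℝ (A : Set Pt))) (hb : b ∈ B) :
    x + b ∈ interior (convexHull ℝ ((A + B : Finset Pt) : Set Pt)) := by
  have hc : ((A + B : Finset Pt) : Set Pt) = (A : Set Pt) + (B : Set Pt) := Finset.coe_add A B
  rw [hc, convexHull_add]
  have hsub : interior (convexHull ℝ (A : Set Pt)) + convexHull ℝ (B : Set Pt) ⊆
      interior (convexHull ℝ (A : Set Pt) + convexHull ℝ (B : Set Pt)) :=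
    interior_maximal (Set.add_subset_add interior_subset subset_rfl)
      (isOpen_interior.add_right)
  exact hsub (Set.add_mem_add hx (subset_convexHull ℝ _ hb))


theorem intCard_sum_ge
    (A B : Finset Pt) (hA : ¬ Collinear ℝ (A : Set Pt)) (hB : ¬ Collinear ℝ (B : Set Pt))
    (hiA : 1 ≤ intCard A) :
    (intCard (A + B) : ℤ) ≥ (intCard A : ℤ) + (B.card : ℤ) - 1 := by
  classical
  set IA := A.filter (fun x => x ∈ interior (convexHull ℝ (A : Set Pt))) with hIAdef
  have hIAcard : intCard A = IA.card := rfl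
  have hIAne : IA.Nonempty := Finset.card_pos.mp (hIAcard ▸ hiA)
  have hBne : B.Nonempty := by
    rcases B.eq_empty_or_nonempty with h | h
    · exfalso; apply hB; rw [h, Finset.coe_empty]; exact collinear_empty ℝ Pt
    · exact h
  obtain ⟨t, ht⟩ := exists_generic (IA ∪ B)
  set f : Pt → ℝ := fun x => x 0 + t * x 1 with hfdef
  have ht' : ∀ p ∈ IA ∪ B, ∀ q ∈ IA ∪ B, f p = f q → p = q := ht
  have hf : ∀ x y : Pt, f (x + y) = f x + f y := by
    intro x y; simp only [hfdef, PiLp.add_apply]; ring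
  obtain ⟨b0, hb0B, hb0⟩ := Finset.exists_max_image B f hBne
  obtain ⟨a0, ha0, ha0m⟩ := Finset.exists_min_image IA f hIAne
  set T1 := IA.image (fun a => a + b0) with hT1
  set T2 := B.image (fun b => a0 + b) with hT2
  have hintersub : T1 ∩ T2 ⊆ {a0 + b0} := by
    intro x hx
    rw [Finset.mem_inter] at hx
    obtain ⟨a', ha', hax⟩ := Finset.mem_image.mp hx.1
    obtain ⟨b, hbB, hbx⟩ := Finset.mem_image.mp hx.2
    have heq : a' + b0 = a0 + b := by rw [hax, hbx]
    have hfeq : f a' + f b0 = f a0 + f b := by rw [← hf, ← hf, heq]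
    have h1 : f a0 ≤ f a' := ha0m a' ha'
    have h2 : f b ≤ f b0 := hb0 b hbB
    have hfa : f a' = f a0 := by linarith
    have ha'a0 : a' = a0 :=
      ht' a' (Finset.mem_union_left _ ha') a0 (Finset.mem_union_left _ ha0) hfa
    rw [Finset.mem_singleton, ← hax, ha'a0]
  have hinter : T1 ∩ T2 = {a0 + b0} := by
    refine Finset.Subset.antisymm hintersub ?_
    simp only [Finset.singleton_subset_iff, Finset.mem_inter]
    exact ⟨Finset.mem_image.mpr ⟨a0, ha0, rfl⟩, Finset.mem_image.mpr ⟨b0, hb0B, rfl⟩⟩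
  have hc1 : T1.card = IA.card := Finset.card_image_of_injective _ (add_left_injective b0)
  have hc2 : T2.card = B.card := Finset.card_image_of_injective _ (add_right_injective a0)
  have hcu : (T1 ∪ T2).card + 1 = IA.card + B.card := by
    have h := Finset.card_union_add_card_inter T1 T2
    rw [hinter] at h
    simpa [hc1, hc2] using h
  have hsub : T1 ∪ T2 ⊆ (A + B).filter
      (fun x => x ∈ interior (convexHull ℝ ((A + B : Finset Pt) : Set Pt))) := by
    intro x hx
    rw [Finset.mem_union] at hx
    rw [Finset.mem_filter]
    rcases hx with hx | hx
    · obtain ⟨a', ha', rfl⟩ := Finset.mem_image.mp hx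
      have hmem := Finset.mem_filter.mp ha'
      exact ⟨Finset.add_mem_add hmem.1 hb0B, mem_interior_sum hmem.2 hb0B⟩
    · obtain ⟨b, hbB, rfl⟩ := Finset.mem_image.mp hx
      have hmem := Finset.mem_filter.mp ha0
      exact ⟨Finset.add_mem_add hmem.1 hbB, mem_interior_sum hmem.2 hbB⟩
  have hle : (T1 ∪ T2).card ≤ intCard (A + B) := Finset.card_le_card hsub
  omega
end
end

section
/- Let A and B be finite non-collinear subsets of ℝ² with i_A ≥ 1 and i_B ≥ 1. Then 2 i_{A+B} ≥ 2 i_A + 2 i_B + b_A + b_B − 2. -/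
open scoped Pointwise Classical RealInnerProductSpace

noncomputable section

/-- The interior filter of a finset. -/
def intPart (A : Finset Pt) : Finset Pt :=
  A.filter fun x => x ∈ interior (convexHull ℝ (A : Set Pt))

lemma intCard_eq (A : Finset Pt) : intCard A = (intPart A).card := rfl

/-- `A + intPart B` consists of interior points of `A + B`. -/
lemma add_intPart_subset (A B : Finset Pt) : A + intPart B ⊆ intPart (A + B) := by
  classical
  intro x hx
  rw [Finset.mem_add] at hx
  obtain ⟨a, ha, b, hb, rfl⟩ := hx
  rw [intPart, Finset.mem_filter] at hb
  obtain ⟨hbB, hbint⟩ := hb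
  rw [intPart, Finset.mem_filter]
  refine ⟨Finset.add_mem_add ha hbB, ?_⟩
  have hhull : convexHull ℝ ((A + B : Finset Pt) : Set Pt)
      = convexHull ℝ (A : Set Pt) + convexHull ℝ (B : Set Pt) := by
    rw [Finset.coe_add, convexHull_add]
  rw [hhull]
  have hopen : IsOpen (convexHull ℝ (A : Set Pt) + interior (convexHull ℝ (B : Set Pt))) :=
    IsOpen.add_left isOpen_interior
  have hsub : convexHull ℝ (A : Set Pt) + interior (convexHull ℝ (B : Set Pt))
      ⊆ convexHull ℝ (A : Set Pt) + convexHull ℝ (B : Set Pt) :=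
    Set.add_subset_add_left interior_subset
  exact interior_maximal hsub hopen
    (Set.add_mem_add (subset_convexHull ℝ _ ha) hbint)

lemma key_ineq (A B : Finset Pt) (hA : A.Nonempty) (hB : (intPart B).Nonempty) :
    A.card + intCard B - 1 ≤ intCard (A + B) := by
  classical
  have htf : IsAddTorsionFree Pt := .of_module_rat _
  have h1 : A.card + (intPart B).card - 1 ≤ (A + intPart B).card :=
    cauchy_davenport_of_isAddTorsionFree hA hB
  have h2 : (A + intPart B).card ≤ (intPart (A + B)).card :=
    Finset.card_le_card (add_intPart_subset A B)
  rw [intCard_eq, intCard_eq]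
  omega

theorem two_intCard_sum_ge
    (A B : Finset Pt) (hA : ¬ Collinear ℝ (A : Set Pt)) (hB : ¬ Collinear ℝ (B : Set Pt))
    (hiA : 1 ≤ intCard A) (hiB : 1 ≤ intCard B) :
    2 * (intCard (A + B) : ℤ) ≥
      2 * (intCard A : ℤ) + 2 * (intCard B : ℤ) + (bdryCard A : ℤ) + (bdryCard B : ℤ) - 2 := by
  have hAne : A.Nonempty := by
    rw [← Finset.card_pos]
    have := bdry_add_int A; omega
  have hBne : B.Nonempty := by
    rw [← Finset.card_pos]
    have := bdry_add_int B; omega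
  have hAint : (intPart A).Nonempty := by
    rw [← Finset.card_pos, ← intCard_eq]; omega
  have hBint : (intPart B).Nonempty := by
    rw [← Finset.card_pos, ← intCard_eq]; omega
  have h1 : A.card + intCard B - 1 ≤ intCard (A + B) := key_ineq A B hAne hBint
  have h2 : B.card + intCard A - 1 ≤ intCard (B + A) := key_ineq B A hBne hAint
  rw [add_comm B A] at h2
  have hA' := bdry_add_int A
  have hB' := bdry_add_int B
  omega
end
end

section
/- Let A and B be finite non-collinear subsets of ℝ², and let v be a unit vector. If a ∈ A_{v,upp} and b ∈ B_{v,low}, then a + b lies in the interior of the convex hull of A + B. -/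
open scoped Pointwise Classical RealInnerProductSpace

noncomputable section

theorem upper_add_lower_mem_interior
    (A B : Finset Pt) (hA : ¬ Collinear ℝ (A : Set Pt)) (hB : ¬ Collinear ℝ (B : Set Pt))
    (v : Pt) (hv : ‖v‖ = 1)
    (a : Pt) (ha : a ∈ upperSet A v) (b : Pt) (hb : b ∈ lowerSet B v) :
    a + b ∈ interior (convexHull ℝ ((A + B : Finset Pt) : Set Pt)) := by
  classical
  simp only [upperSet, Finset.mem_filter] at ha
  simp only [lowerSet, Finset.mem_filter] at hb
  obtain ⟨haA, -, hpos⟩ := ha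
  obtain ⟨hbB, -, hneg⟩ := hb
  set K : Set Pt := convexHull ℝ ((A + B : Finset Pt) : Set Pt) with hK
  have hconv : Convex ℝ K := convex_convexHull ℝ _
  -- the vector span of A is everything
  have hvs : vectorSpan ℝ (A : Set Pt) = ⊤ := by
    by_contra hne
    refine hA (collinear_iff_finrank_le_one.mpr ?_)
    have h1 : Module.finrank ℝ (vectorSpan ℝ (A : Set Pt)) < Module.finrank ℝ Pt :=
      Submodule.finrank_lt hne
    have h2 : Module.finrank ℝ Pt = 2 := finrank_euclideanSpace_fin
    omega
  have hvsAB : vectorSpan ℝ ((A + B : Finset Pt) : Set Pt) = ⊤ := by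
    rw [eq_top_iff, ← hvs, vectorSpan_def]
    refine Submodule.span_le.mpr ?_
    rintro u ⟨x, hx, y, hy, rfl⟩
    have hxy : x -ᵥ y = (x + b) -ᵥ (y + b) := by
      simp [vsub_eq_sub]
    show x -ᵥ y ∈ _
    rw [hxy]
    exact vsub_mem_vectorSpan ℝ (by exact_mod_cast Finset.add_mem_add hx hbB)
      (by exact_mod_cast Finset.add_mem_add hy hbB)
  have habAB : a + b ∈ ((A + B : Finset Pt) : Set Pt) := by
    exact_mod_cast Finset.add_mem_add haA hbB
  have habK : a + b ∈ K := subset_convexHull ℝ _ habAB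
  have hspan : affineSpan ℝ ((A + B : Finset Pt) : Set Pt) = ⊤ := by
    rw [AffineSubspace.affineSpan_eq_top_iff_vectorSpan_eq_top_of_nonempty ℝ Pt Pt ⟨a + b, habAB⟩]
    exact hvsAB
  have hint : (interior K).Nonempty := by
    rw [hconv.interior_nonempty_iff_affineSpan_eq_top, hK, affineSpan_convexHull]
    exact hspan
  by_contra hnotin
  obtain ⟨f, hf⟩ := geometric_hahn_banach_open_point hconv.interior isOpen_interior hnotin
  obtain ⟨z, hz⟩ := hint
  have hfK : ∀ y ∈ K, f y ≤ f (a + b) := by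
    intro y hy
    have key : ∀ t ∈ Set.Ioo (0 : ℝ) 1, f ((1 - t) • y + t • z) < f (a + b) := by
      intro t ht
      exact hf _ (hconv.combo_closure_interior_mem_interior (subset_closure hy) hz
        (by linarith [ht.2]) ht.1 (by ring))
    have hcont : Filter.Tendsto (fun t : ℝ => f ((1 - t) • y + t • z))
        (nhdsWithin 0 (Set.Ioi 0)) (nhds (f y)) := by
      have hc : Continuous fun t : ℝ => f ((1 - t) • y + t • z) := by continuity
      have h0 := hc.tendsto 0
      simp only [sub_zero, one_smul, zero_smul, add_zero] at h0
      exact h0.mono_left nhdsWithin_le_nhds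
    refine le_of_tendsto hcont ?_
    filter_upwards [Ioo_mem_nhdsGT_of_mem (by norm_num : (0 : ℝ) ∈ Set.Ico 0 1)] with t ht
      using (key t ht).le
  set u : Pt := (InnerProductSpace.toDual ℝ Pt).symm f with hu_def
  have hu : ∀ w : Pt, ⟪u, w⟫ = f w := fun w => InnerProductSpace.toDual_symm_apply
  have hune : u ≠ 0 := by
    intro h0
    have h1 := hf z hz
    rw [← hu, ← hu, h0, inner_zero_left, inner_zero_left] at h1
    exact lt_irrefl _ h1
  have hnorm : ‖(‖u‖⁻¹ : ℝ) • u‖ = 1 := norm_smul_inv_norm hune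
  have hAB_le : ∀ x ∈ A, ∀ y ∈ B, ⟪u, x + y⟫ ≤ ⟪u, a + b⟫ := by
    intro x hx y hy
    rw [hu, hu]
    exact hfK _ (subset_convexHull ℝ _ (by exact_mod_cast Finset.add_mem_add hx hy))
  have hextA : IsExtNormal A ((‖u‖⁻¹ : ℝ) • u) a := by
    intro y hy
    have h1 := hAB_le y hy b hbB
    rw [inner_add_right, inner_add_right] at h1
    have h2 : ⟪u, y⟫ ≤ ⟪u, a⟫ := by linarith
    rw [real_inner_smul_left, real_inner_smul_left]
    exact mul_le_mul_of_nonneg_left h2 (inv_nonneg.mpr (norm_nonneg u))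
  have hextB : IsExtNormal B ((‖u‖⁻¹ : ℝ) • u) b := by
    intro y hy
    have h1 := hAB_le a haA y hy
    rw [inner_add_right, inner_add_right] at h1
    have h2 : ⟪u, y⟫ ≤ ⟪u, b⟫ := by linarith
    rw [real_inner_smul_left, real_inner_smul_left]
    exact mul_le_mul_of_nonneg_left h2 (inv_nonneg.mpr (norm_nonneg u))
  have hp := hpos _ hnorm hextA
  have hn := hneg _ hnorm hextB
  linarith
end
end

section
/- Let A and B be finite non-collinear subsets of ℝ², and let v be a unit vector that is not parallel to any side of [A] or of [B]. If the four sets A_{v,upp}, A_{v,low}, B_{v,upp}, B_{v,low} are all non-empty, then 2 i_{A+B} ≥ b_A + b_B − 6. -/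
open scoped Pointwise Classical RealInnerProductSpace

noncomputable section

namespace UL


lemma inner_coords (x y : Pt) : ⟪x, y⟫ = x 0 * y 0 + x 1 * y 1 := by
  simp [PiLp.inner_apply, RCLike.inner_apply, Fin.sum_univ_two, mul_comm]

lemma perp_apply0 (v : Pt) : perp v 0 = v 1 := rfl
lemma perp_apply1 (v : Pt) : perp v 1 = -(v 0) := rfl

lemma coords_ext {x y : Pt} (h0 : x 0 = y 0) (h1 : x 1 = y 1) : x = y := by
  ext i; fin_cases i <;> assumption

lemma inner_self_one {v : Pt} (hv : ‖v‖ = 1) : ⟪v, v⟫ = 1 := by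
  rw [real_inner_self_eq_norm_sq, hv]; norm_num

lemma norm_one_of_inner {x : Pt} (h : ⟪x, x⟫ = 1) : ‖x‖ = 1 := by
  rw [real_inner_self_eq_norm_sq] at h; nlinarith [norm_nonneg x]

lemma perp_norm {v : Pt} (hv : ‖v‖ = 1) : ‖perp v‖ = 1 := by
  have h := inner_self_one hv
  rw [inner_coords] at h
  apply norm_one_of_inner
  rw [inner_coords, perp_apply0, perp_apply1]
  linear_combination h

lemma perp_inner (v : Pt) : ⟪perp v, v⟫ = 0 := by
  rw [inner_coords, perp_apply0, perp_apply1]; ring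

lemma perp_neg (v : Pt) : perp (-v) = -perp v := by
  apply coords_ext
  · rw [perp_apply0]; simp [perp_apply0]
  · rw [perp_apply1]; simp [perp_apply1]

lemma pt_ext {v : Pt} (hv : ‖v‖ = 1) {x y : Pt}
    (h1 : ⟪v, x⟫ = ⟪v, y⟫) (h2 : ⟪perp v, x⟫ = ⟪perp v, y⟫) : x = y := by
  have hn := inner_self_one hv; rw [inner_coords] at hn
  simp only [inner_coords, perp_apply0, perp_apply1] at h1 h2
  apply coords_ext
  · linear_combination v 0 * h1 + v 1 * h2 - (x 0 - y 0) * hn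
  · linear_combination v 1 * h1 - v 0 * h2 - (x 1 - y 1) * hn

lemma eq_perp_or_neg {v u : Pt} (hv : ‖v‖ = 1) (hu : ‖u‖ = 1) (h : ⟪u, v⟫ = 0) :
    u = perp v ∨ u = -perp v := by
  have hn := inner_self_one hv; rw [inner_coords] at hn
  have hun := inner_self_one hu; rw [inner_coords] at hun
  rw [inner_coords] at h
  set c := u 0 * v 1 - u 1 * v 0 with hc
  have h0 : u 0 = c * v 1 := by rw [hc]; linear_combination v 0 * h - u 0 * hn
  have h1 : u 1 = c * (-(v 0)) := by rw [hc]; linear_combination v 1 * h - u 1 * hn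
  have hc2 : c * c = 1 := by
    rw [h0, h1] at hun; linear_combination hun - (c * c) * hn
  rcases mul_self_eq_one_iff.mp hc2 with hc1 | hc1
  · left; exact coords_ext (by rw [h0, hc1, perp_apply0]; ring)
      (by rw [h1, hc1, perp_apply1]; ring)
  · right; refine coords_ext ?_ ?_
    · rw [h0, hc1]; show _ = -(perp v 0); rw [perp_apply0]; ring
    · rw [h1, hc1]; show _ = -(perp v 1); rw [perp_apply1]; ring

lemma inner_decomp {v : Pt} (hv : ‖v‖ = 1) (x y : Pt) :
    ⟪x, y⟫ = ⟪v, x⟫ * ⟪v, y⟫ + ⟪perp v, x⟫ * ⟪perp v, y⟫ := by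
  have hn := inner_self_one hv; rw [inner_coords] at hn
  simp only [inner_coords, perp_apply0, perp_apply1]
  linear_combination (-(x 0 * y 0) - x 1 * y 1) * hn

lemma perp_span {u q : Pt} (hu : u ≠ 0) (h : ⟪u, q⟫ = 0) : ∃ r : ℝ, q = r • perp u := by
  have hpos : (0:ℝ) < ⟪u, u⟫ := by
    have h' : 0 < ‖u‖ := norm_pos_iff.mpr hu
    rw [real_inner_self_eq_norm_sq]; positivity
  rw [inner_coords] at h hpos
  refine ⟨(q 0 * u 1 - q 1 * u 0) / (u 0 * u 0 + u 1 * u 1), coords_ext ?_ ?_⟩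
  · show q 0 = _ * perp u 0
    rw [perp_apply0, div_mul_eq_mul_div, eq_div_iff hpos.ne']
    linear_combination u 0 * h
  · show q 1 = _ * perp u 1
    rw [perp_apply1, div_mul_eq_mul_div, eq_div_iff hpos.ne']
    linear_combination u 1 * h



lemma sep {K : Set Pt} (hK : Convex ℝ K) (hne : (interior K).Nonempty) {x : Pt}
    (hx : x ∈ K) (hxi : x ∉ interior K) :
    ∃ u : Pt, u ≠ 0 ∧ ∀ y ∈ K, ⟪u, y⟫ ≤ ⟪u, x⟫ := by
  obtain ⟨f, hf⟩ := geometric_hahn_banach_open_point hK.interior isOpen_interior hxi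
  obtain ⟨z, hz⟩ := hne
  have hzx : f z < f x := hf z hz
  refine ⟨(InnerProductSpace.toDual ℝ Pt).symm f, ?_, ?_⟩
  · intro h0
    have h1 : ⟪(InnerProductSpace.toDual ℝ Pt).symm f, z⟫ = f z :=
      InnerProductSpace.toDual_symm_apply
    have h2 : ⟪(InnerProductSpace.toDual ℝ Pt).symm f, x⟫ = f x :=
      InnerProductSpace.toDual_symm_apply
    rw [h0, inner_zero_left] at h1 h2
    rw [← h1, ← h2] at hzx; exact lt_irrefl _ hzx
  · intro y hy
    rw [InnerProductSpace.toDual_symm_apply, InnerProductSpace.toDual_symm_apply]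
    by_contra hlt
    push_neg at hlt
    have key : ∀ t : ℝ, 0 < t → t ≤ 1 → t * f z + (1 - t) * f y < f x := by
      intro t ht ht1
      have hmem : t • z + (1 - t) • y ∈ interior K :=
        hK.combo_interior_closure_subset_interior ht (by linarith) (by ring)
          (Set.add_mem_add (Set.smul_mem_smul_set hz)
            (Set.smul_mem_smul_set (subset_closure hy)))
      have := hf _ hmem
      simpa [map_add, map_smul, smul_eq_mul] using this
    rcases le_or_gt (f y) (f z) with hc | hc
    · have h1 := key 1 one_pos le_rfl
      simp only [sub_self, one_mul, zero_mul, add_zero] at h1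
      linarith
    · set t := (f y - f x) / (2 * (f y - f z)) with hts
      have hden : 0 < f y - f z := by linarith
      have ht : 0 < t := div_pos (by linarith) (by linarith)
      have ht1 : t ≤ 1 := by
        rw [hts, div_le_one (by linarith)]; linarith
      have hk := key t ht ht1
      have heq : t * (f y - f z) = (f y - f x) / 2 := by
        rw [hts]; field_simp
      nlinarith [hk, heq]

lemma hull_int_ne {A : Finset Pt} (hA : ¬ Collinear ℝ (A : Set Pt)) :
    (interior (convexHull ℝ (A : Set Pt))).Nonempty := by
  rw [(convex_convexHull ℝ _).interior_nonempty_iff_affineSpan_eq_top, affineSpan_convexHull]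
  have hne : (A : Set Pt).Nonempty := by
    rcases (A : Set Pt).eq_empty_or_nonempty with h | h
    · exact absurd (h ▸ collinear_empty ℝ Pt) hA
    · exact h
  rw [AffineSubspace.affineSpan_eq_top_iff_vectorSpan_eq_top_of_nonempty ℝ Pt Pt hne]
  apply Submodule.eq_top_of_finrank_eq
  have h2 : Module.finrank ℝ Pt = 2 := finrank_euclideanSpace_fin
  have hle := Submodule.finrank_le (vectorSpan ℝ (A : Set Pt))
  have hgt : ¬ Module.finrank ℝ (vectorSpan ℝ (A : Set Pt)) ≤ 1 := fun hcon =>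
    hA (collinear_iff_finrank_le_one.mpr hcon)
  omega

lemma exists_normal {A : Finset Pt} (hA : ¬ Collinear ℝ (A : Set Pt)) {a : Pt} (ha : a ∈ A)
    (h : a ∉ interior (convexHull ℝ (A : Set Pt))) : ∃ u, u ≠ 0 ∧ IsExtNormal A u a := by
  obtain ⟨u, hu, hle⟩ := sep (convex_convexHull ℝ _) (hull_int_ne hA)
    (subset_convexHull ℝ _ ha) h
  exact ⟨u, hu, fun y hy => hle y (subset_convexHull ℝ _ hy)⟩

lemma collinear_of_inner_eq {A : Finset Pt} {u x : Pt} (hu : u ≠ 0) (hx : x ∈ A)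
    (h : ∀ y ∈ A, ⟪u, y⟫ = ⟪u, x⟫) : Collinear ℝ (A : Set Pt) := by
  rw [collinear_iff_of_mem (show x ∈ (A : Set Pt) from hx)]
  refine ⟨perp u, fun p hp => ?_⟩
  have h0 : ⟪u, p - x⟫ = 0 := by
    rw [inner_sub_right, h p hp]; ring
  obtain ⟨r, hr⟩ := perp_span hu h0
  exact ⟨r, by rw [← hr]; simp⟩

lemma normal_smul {A : Finset Pt} {u a : Pt} {c : ℝ} (hc : 0 ≤ c)
    (h : IsExtNormal A u a) : IsExtNormal A (c • u) a := fun y hy => by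
  rw [real_inner_smul_left, real_inner_smul_left]
  exact mul_le_mul_of_nonneg_left (h y hy) hc

lemma mem_upperSet {A : Finset Pt} {v a : Pt} :
    a ∈ upperSet A v ↔ a ∈ A ∧ (∃ u, u ≠ 0 ∧ IsExtNormal A u a) ∧
      ∀ u, ‖u‖ = 1 → IsExtNormal A u a → 0 < ⟪u, v⟫ := by
  simp [upperSet, Finset.mem_filter, and_assoc]

lemma mem_lowerSet {A : Finset Pt} {v a : Pt} :
    a ∈ lowerSet A v ↔ a ∈ A ∧ (∃ u, u ≠ 0 ∧ IsExtNormal A u a) ∧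
      ∀ u, ‖u‖ = 1 → IsExtNormal A u a → ⟪u, v⟫ < 0 := by
  simp [lowerSet, Finset.mem_filter, and_assoc]

lemma lower_eq_upper_neg (A : Finset Pt) (v : Pt) : lowerSet A v = upperSet A (-v) := by
  ext a
  rw [mem_lowerSet, mem_upperSet]
  simp only [inner_neg_right, neg_pos]

lemma upper_eq_lower_neg (A : Finset Pt) (v : Pt) : upperSet A v = lowerSet A (-v) := by
  rw [lower_eq_upper_neg, neg_neg]


lemma exists_unit_normal_pos {A : Finset Pt} {v a : Pt} (ha : a ∈ upperSet A v) :
    ∃ u : Pt, ‖u‖ = 1 ∧ IsExtNormal A u a ∧ 0 < ⟪u, v⟫ := by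
  obtain ⟨-, ⟨u, hu0, hn⟩, hall⟩ := mem_upperSet.mp ha
  refine ⟨‖u‖⁻¹ • u, norm_smul_inv_norm hu0, normal_smul (inv_nonneg.mpr (norm_nonneg u)) hn, ?_⟩
  exact hall _ (norm_smul_inv_norm hu0) (normal_smul (inv_nonneg.mpr (norm_nonneg u)) hn)

lemma upper_step {A : Finset Pt} {v a a' : Pt} (hv : ‖v‖ = 1)
    (ha : a ∈ upperSet A v) (ha' : a' ∈ A) (hw : ⟪perp v, a⟫ = ⟪perp v, a'⟫) :
    ⟪v, a'⟫ ≤ ⟪v, a⟫ := by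
  obtain ⟨u, hun, hnorm, hpos⟩ := exists_unit_normal_pos ha
  have hle := hnorm a' ha'
  rw [inner_decomp hv u a', inner_decomp hv u a] at hle
  have hvu : 0 < ⟪v, u⟫ := by rwa [real_inner_comm]
  by_contra hcon
  push_neg at hcon
  have h2 : ⟪v, u⟫ * ⟪v, a⟫ < ⟪v, u⟫ * ⟪v, a'⟫ := mul_lt_mul_of_pos_left hcon hvu
  rw [hw] at hle
  linarith

lemma upper_inj {A : Finset Pt} {v a a' : Pt} (hv : ‖v‖ = 1)
    (ha : a ∈ upperSet A v) (ha' : a' ∈ upperSet A v)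
    (hw : ⟪perp v, a⟫ = ⟪perp v, a'⟫) : a = a' := by
  have h1 := upper_step hv ha (mem_upperSet.mp ha').1 hw
  have h2 := upper_step hv ha' (mem_upperSet.mp ha).1 hw.symm
  exact pt_ext hv (le_antisymm h2 h1) hw

lemma lower_inj {A : Finset Pt} {v a a' : Pt} (hv : ‖v‖ = 1)
    (ha : a ∈ lowerSet A v) (ha' : a' ∈ lowerSet A v)
    (hw : ⟪perp v, a⟫ = ⟪perp v, a'⟫) : a = a' := by
  rw [lower_eq_upper_neg] at ha ha'
  refine upper_inj (v := -v) (by rwa [norm_neg]) ha ha' ?_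
  rw [perp_neg, inner_neg_left, inner_neg_left, hw]

lemma nonempty_of_not_collinear {A : Finset Pt} (hA : ¬ Collinear ℝ (A : Set Pt)) :
    (A : Set Pt).Nonempty := by
  rcases (A : Set Pt).eq_empty_or_nonempty with h | h
  · exact absurd (h ▸ collinear_empty ℝ Pt) hA
  · exact h

lemma interior_mem {A B : Finset Pt} {v a b : Pt} (hv : ‖v‖ = 1)
    (hA : ¬ Collinear ℝ (A : Set Pt)) (hBne : (B : Set Pt).Nonempty)
    (ha : a ∈ upperSet A v) (hb : b ∈ lowerSet B v) :
    a + b ∈ interior (convexHull ℝ ((A + B : Finset Pt) : Set Pt)) := by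
  have haA : a ∈ A := (mem_upperSet.mp ha).1
  have hbB : b ∈ B := (mem_lowerSet.mp hb).1
  have hint : (interior (convexHull ℝ ((A + B : Finset Pt) : Set Pt))).Nonempty := by
    rw [Finset.coe_add, convexHull_add]
    obtain ⟨z, hz⟩ := hull_int_ne hA
    obtain ⟨y, hy⟩ := hBne
    have hopen : IsOpen (interior (convexHull ℝ (A : Set Pt)) + convexHull ℝ (B : Set Pt)) :=
      isOpen_interior.add_right
    refine ⟨z + y, interior_maximal (Set.add_subset_add interior_subset subset_rfl) hopen
      (Set.add_mem_add hz (subset_convexHull ℝ _ hy))⟩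
  by_contra hni
  have hmemK : a + b ∈ convexHull ℝ ((A + B : Finset Pt) : Set Pt) :=
    subset_convexHull ℝ _ (Finset.mem_coe.mpr (Finset.add_mem_add haA hbB))
  obtain ⟨u, hu, hle⟩ := sep (convex_convexHull ℝ _) hint hmemK hni
  have hnA : IsExtNormal A u a := by
    intro y hy
    have := hle (y + b) (subset_convexHull ℝ _ (Finset.mem_coe.mpr (Finset.add_mem_add hy hbB)))
    rw [inner_add_right, inner_add_right] at this
    linarith
  have hnB : IsExtNormal B u b := by
    intro y hy
    have := hle (a + y) (subset_convexHull ℝ _ (Finset.mem_coe.mpr (Finset.add_mem_add haA hy)))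
    rw [inner_add_right, inner_add_right] at this
    linarith
  set u' := ‖u‖⁻¹ • u with hu'
  have hun : ‖u'‖ = 1 := norm_smul_inv_norm hu
  have hpos := (mem_upperSet.mp ha).2.2 u' hun (normal_smul (inv_nonneg.mpr (norm_nonneg u)) hnA)
  have hneg := (mem_lowerSet.mp hb).2.2 u' hun (normal_smul (inv_nonneg.mpr (norm_nonneg u)) hnB)
  linarith

lemma bdry_le {A : Finset Pt} {v : Pt} (hv : ‖v‖ = 1) (hA : ¬ Collinear ℝ (A : Set Pt))
    (hvA : NotParallelToSide v A) :
    bdryCard A ≤ (upperSet A v).card + (lowerSet A v).card + 2 := by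
  have hsub : A.filter (fun x => x ∈ frontier (convexHull ℝ (A : Set Pt)))
      ⊆ ((upperSet A v ∪ lowerSet A v) ∪ maxSet A (perp v)) ∪ maxSet A (-perp v) := by
    intro x hx
    obtain ⟨hxA, hxf⟩ := Finset.mem_filter.mp hx
    have hcl : IsClosed (convexHull ℝ (A : Set Pt)) := (A.finite_toSet.isClosed_convexHull (𝕜 := ℝ))
    have hxint : x ∉ interior (convexHull ℝ (A : Set Pt)) := by
      rw [hcl.frontier_eq] at hxf; exact hxf.2
    obtain ⟨u₀, hu₀, hn₀⟩ := exists_normal hA hxA hxint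
    simp only [Finset.mem_union]
    by_cases hup : x ∈ upperSet A v
    · exact Or.inl (Or.inl (Or.inl hup))
    by_cases hlo : x ∈ lowerSet A v
    · exact Or.inl (Or.inl (Or.inr hlo))
    have hu1 : ∃ u, ‖u‖ = 1 ∧ IsExtNormal A u x ∧ ⟪u, v⟫ ≤ 0 := by
      by_contra hcon
      push_neg at hcon
      exact hup (mem_upperSet.mpr ⟨hxA, ⟨u₀, hu₀, hn₀⟩,
        fun u h1 h2 => hcon u h1 h2⟩)
    have hu2 : ∃ u, ‖u‖ = 1 ∧ IsExtNormal A u x ∧ 0 ≤ ⟪u, v⟫ := by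
      by_contra hcon
      push_neg at hcon
      exact hlo (mem_lowerSet.mpr ⟨hxA, ⟨u₀, hu₀, hn₀⟩,
        fun u h1 h2 => hcon u h1 h2⟩)
    obtain ⟨u₁, hu₁n, hu₁e, hu₁v⟩ := hu1
    obtain ⟨u₂, hu₂n, hu₂e, hu₂v⟩ := hu2
    have hmem : ∀ u : Pt, ‖u‖ = 1 → IsExtNormal A u x → ⟪u, v⟫ = 0 →
        (x ∈ maxSet A (perp v) ∨ x ∈ maxSet A (-perp v)) := by
      intro u hn he h0
      rcases eq_perp_or_neg hv hn h0 with h | h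
      · exact Or.inl (Finset.mem_filter.mpr ⟨hxA, h ▸ he⟩)
      · exact Or.inr (Finset.mem_filter.mpr ⟨hxA, h ▸ he⟩)
    rcases eq_or_lt_of_le hu₁v with h10 | h1lt
    · rcases hmem u₁ hu₁n hu₁e h10 with h | h
      · exact Or.inl (Or.inr h)
      · exact Or.inr h
    rcases eq_or_lt_of_le hu₂v with h20 | h2lt
    · rcases hmem u₂ hu₂n hu₂e h20.symm with h | h
      · exact Or.inl (Or.inr h)
      · exact Or.inr h
    -- now ⟪u₁, v⟫ < 0 < ⟪u₂, v⟫
    set s : ℝ := ⟪u₂, v⟫ with hs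
    set r : ℝ := -⟪u₁, v⟫ with hr
    have hspos : 0 < s := h2lt
    have hrpos : 0 < r := by rw [hr]; linarith
    set u₃ : Pt := s • u₁ + r • u₂ with hu₃
    have hu₃v : ⟪u₃, v⟫ = 0 := by
      rw [hu₃, inner_add_left, real_inner_smul_left, real_inner_smul_left, hs, hr]; ring
    have hu₃e : IsExtNormal A u₃ x := by
      intro y hy
      rw [hu₃, inner_add_left, inner_add_left, real_inner_smul_left, real_inner_smul_left,
        real_inner_smul_left, real_inner_smul_left]
      have := hu₁e y hy
      have := hu₂e y hy
      nlinarith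
    have hu₃0 : u₃ ≠ 0 := by
      intro h0
      have hall : ∀ y ∈ A, ⟪u₂, y⟫ = ⟪u₂, x⟫ := by
        intro y hy
        have hz : ⟪u₃, y⟫ = 0 := by rw [h0, inner_zero_left]
        have hz' : ⟪u₃, x⟫ = 0 := by rw [h0, inner_zero_left]
        rw [hu₃, inner_add_left, real_inner_smul_left, real_inner_smul_left] at hz hz'
        have h1 := hu₁e y hy
        have h2 := hu₂e y hy
        -- s⟪u₁,y⟫ + r⟪u₂,y⟫ = 0 = s⟪u₁,x⟫ + r⟪u₂,x⟫
        nlinarith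
      have hu₂0 : u₂ ≠ 0 := by
        intro h; rw [h, norm_zero] at hu₂n; norm_num at hu₂n
      exact hA (collinear_of_inner_eq hu₂0 hxA hall)
    set u₄ : Pt := ‖u₃‖⁻¹ • u₃ with hu₄
    have hu₄n : ‖u₄‖ = 1 := norm_smul_inv_norm hu₃0
    have hu₄e : IsExtNormal A u₄ x := normal_smul (inv_nonneg.mpr (norm_nonneg u₃)) hu₃e
    have hu₄v : ⟪u₄, v⟫ = 0 := by
      rw [hu₄, real_inner_smul_left, hu₃v, mul_zero]
    rcases hmem u₄ hu₄n hu₄e hu₄v with h | h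
    · exact Or.inl (Or.inr h)
    · exact Or.inr h
  calc bdryCard A ≤ (((upperSet A v ∪ lowerSet A v) ∪ maxSet A (perp v)) ∪ maxSet A (-perp v)).card :=
        Finset.card_le_card hsub
    _ ≤ ((upperSet A v ∪ lowerSet A v) ∪ maxSet A (perp v)).card + (maxSet A (-perp v)).card :=
        Finset.card_union_le _ _
    _ ≤ (upperSet A v ∪ lowerSet A v).card + (maxSet A (perp v)).card + (maxSet A (-perp v)).card := by
        have := Finset.card_union_le (upperSet A v ∪ lowerSet A v) (maxSet A (perp v))
        omega
    _ ≤ (upperSet A v).card + (lowerSet A v).card + (maxSet A (perp v)).card + (maxSet A (-perp v)).card := by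
        have := Finset.card_union_le (upperSet A v) (lowerSet A v)
        omega
    _ ≤ (upperSet A v).card + (lowerSet A v).card + 2 := by
        have h1 : (maxSet A (perp v)).card ≤ 1 := hvA (perp v) (perp_norm hv) (perp_inner v)
        have h2 : (maxSet A (-perp v)).card ≤ 1 := hvA (-perp v) (by rw [norm_neg]; exact perp_norm hv)
          (by rw [inner_neg_left, perp_inner, neg_zero])
        omega

lemma count {A B : Finset Pt} {v : Pt} (hv : ‖v‖ = 1)
    (hA : ¬ Collinear ℝ (A : Set Pt)) (hB : ¬ Collinear ℝ (B : Set Pt))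
    (hu : (upperSet A v).Nonempty) (hl : (lowerSet B v).Nonempty) :
    (upperSet A v).card + (lowerSet B v).card ≤ intCard (A + B) + 1 := by
  obtain ⟨ap, hap, hamax⟩ := Finset.exists_max_image (upperSet A v) (fun a => ⟪perp v, a⟫) hu
  obtain ⟨bm, hbm, hbmin⟩ := Finset.exists_min_image (lowerSet B v) (fun b => ⟪perp v, b⟫) hl
  have hapA : ap ∈ A := (mem_upperSet.mp hap).1
  have hbmB : bm ∈ B := (mem_lowerSet.mp hbm).1
  have hBne : (B : Set Pt).Nonempty := nonempty_of_not_collinear hB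
  set S₁ := (upperSet A v).image (· + bm) with hS₁
  set S₂ := (lowerSet B v).image (ap + ·) with hS₂
  have hS₁card : S₁.card = (upperSet A v).card :=
    Finset.card_image_of_injective _ (add_left_injective bm)
  have hS₂card : S₂.card = (lowerSet B v).card :=
    Finset.card_image_of_injective _ (add_right_injective ap)
  have hsub : S₁ ∪ S₂ ⊆ (A + B).filter
      (fun x => x ∈ interior (convexHull ℝ ((A + B : Finset Pt) : Set Pt))) := by
    intro x hx
    rcases Finset.mem_union.mp hx with hx | hx
    · obtain ⟨a, ha, rfl⟩ := Finset.mem_image.mp hx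
      exact Finset.mem_filter.mpr ⟨Finset.add_mem_add (mem_upperSet.mp ha).1 hbmB,
        interior_mem hv hA hBne ha hbm⟩
    · obtain ⟨b, hb, rfl⟩ := Finset.mem_image.mp hx
      exact Finset.mem_filter.mpr ⟨Finset.add_mem_add hapA (mem_lowerSet.mp hb).1,
        interior_mem hv hA hBne hap hb⟩
  have hinter : S₁ ∩ S₂ ⊆ {ap + bm} := by
    intro x hx
    obtain ⟨hx1, hx2⟩ := Finset.mem_inter.mp hx
    obtain ⟨a, ha, hax⟩ := Finset.mem_image.mp hx1
    obtain ⟨b, hb, hbx⟩ := Finset.mem_image.mp hx2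
    have heq : a + bm = ap + b := hax.trans hbx.symm
    have hinner : ⟪perp v, a⟫ + ⟪perp v, bm⟫ = ⟪perp v, ap⟫ + ⟪perp v, b⟫ := by
      rw [← inner_add_right, ← inner_add_right, heq]
    have h1 := hamax a ha
    have h2 := hbmin b hb
    have ea : ⟪perp v, a⟫ = ⟪perp v, ap⟫ := le_antisymm h1 (by linarith)
    have eb : ⟪perp v, bm⟫ = ⟪perp v, b⟫ := le_antisymm h2 (by linarith)
    have hae : a = ap := upper_inj hv ha hap ea
    have hbe : bm = b := lower_inj hv hbm hb eb
    rw [Finset.mem_singleton, ← hax, hae, hbe]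
  have hcard := Finset.card_union_add_card_inter S₁ S₂
  have hil : (S₁ ∩ S₂).card ≤ 1 := by
    calc (S₁ ∩ S₂).card ≤ ({ap + bm} : Finset Pt).card := Finset.card_le_card hinter
      _ = 1 := Finset.card_singleton _
  have hiu : (S₁ ∪ S₂).card ≤ intCard (A + B) := Finset.card_le_card hsub
  omega


end UL

theorem upperlower
    (A B : Finset Pt) (hA : ¬ Collinear ℝ (A : Set Pt)) (hB : ¬ Collinear ℝ (B : Set Pt))
    (v : Pt) (hv : ‖v‖ = 1)
    (hvA : NotParallelToSide v A) (hvB : NotParallelToSide v B)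
    (h1 : (upperSet A v).Nonempty) (h2 : (lowerSet A v).Nonempty)
    (h3 : (upperSet B v).Nonempty) (h4 : (lowerSet B v).Nonempty) :
    2 * (intCard (A + B) : ℤ) ≥ (bdryCard A : ℤ) + (bdryCard B : ℤ) - 6 := by
  have h2' : (upperSet A (-v)).Nonempty := by rwa [← UL.lower_eq_upper_neg]
  have h3' : (lowerSet B (-v)).Nonempty := by rwa [← UL.upper_eq_lower_neg]
  have i1 := UL.count hv hA hB h1 h4
  have i2 := UL.count (v := -v) (by rwa [norm_neg]) hA hB h2' h3'
  rw [← UL.lower_eq_upper_neg, ← UL.upper_eq_lower_neg] at i2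
  have b1 := UL.bdry_le hv hA hvA
  have b2 := UL.bdry_le hv hB hvB
  omega
end
end
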